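/- arXiv:2210.14856 — 3 statements merged into one kernel-verified Lean document; each statement's English description precedes it below -/
import Mathlib

section
/- Let m ≥ 2 and let s be a positive multiple of m. The m×m integer matrix M whose first row is (−1, 0, …, 0, 1), whose second row is (2s/m, −1, 0, …, 0), and whose i-th row for 3 ≤ i ≤ m has first entry s/m, entry 1 in column i−1, entry −1 in column i, and 0 elsewhere, satisfies det M = (−1)^{m−1}(s−1); in particular |det M| = s−1. (This matrix is an RF-matrix of the Frobenius number s−1 of the Arf numerical semigroup S = ⟨m, s+1, …, s+m−1⟩.) -/
/-- `S ⊆ ℕ` is a numerical semigroup: contains `0`, closed under addition,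
and has finite complement in `ℕ`. -/
def IsNumericalSemigroup (S : Set ℕ) : Prop :=
  0 ∈ S ∧ (∀ a ∈ S, ∀ b ∈ S, a + b ∈ S) ∧ (Sᶜ).Finite

/-- `S` satisfies the Arf condition: for `x ≤ y` in `S`, `2y - x ∈ S`. -/
def IsArf (S : Set ℕ) : Prop :=
  ∀ x ∈ S, ∀ y ∈ S, x ≤ y → 2 * y - x ∈ S

/-- `m` is the multiplicity of `S`: the smallest nonzero element. -/
def HasMultiplicity (S : Set ℕ) (m : ℕ) : Prop :=
  m ∈ S ∧ m ≠ 0 ∧ ∀ n ∈ S, n ≠ 0 → m ≤ n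

/-- `s` is the conductor of `S`: the least `t` with `[t, ∞) ⊆ S`. -/
def HasConductor (S : Set ℕ) (s : ℕ) : Prop :=
  (∀ n, s ≤ n → n ∈ S) ∧ ∀ t, (∀ n, t ≤ n → n ∈ S) → s ≤ t

/-- The set of pseudo-Frobenius numbers of `S`. -/
def pseudoFrobeniusSet (S : Set ℕ) : Set ℕ :=
  {z | z ∉ S ∧ ∀ n ∈ S, n ≠ 0 → z + n ∈ S}

/-- `A` is a row-factorization (RF-) matrix of `f` with respect to generators `n`:
diagonal entries are `-1`, off-diagonal entries are nonnegative, and every row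
gives a representation of `f` in terms of the generators. -/
def IsRFMatrix {e : ℕ} (n : Fin e → ℕ) (f : ℤ) (A : Matrix (Fin e) (Fin e) ℤ) : Prop :=
  (∀ i, A i i = -1) ∧ (∀ i j, i ≠ j → 0 ≤ A i j) ∧
    (∀ i, f = ∑ j, A i j * (n j : ℤ))

set_option linter.unreachableTactic false
set_option linter.unusedTactic false

lemma fin_sum_ite {m : ℕ} (c : ℕ) (f : Fin m → ℤ) :
    ∑ j : Fin m, (if (j:ℕ) = c then f j else 0) = if h : c < m then f ⟨c, h⟩ else 0 := by
  split_ifs with h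
  · rw [Finset.sum_eq_single (⟨c, h⟩ : Fin m)]
    · simp
    · intro b _ hb; rw [if_neg]; simpa [Fin.ext_iff] using hb
    · simp
  · apply Finset.sum_eq_zero
    intro j _; rw [if_neg]; intro hj; exact h (hj ▸ j.isLt)

def Umat (m : ℕ) : Matrix (Fin m) (Fin m) ℤ :=
  Matrix.of fun j l => if (l:ℕ) = 0 then (if (j:ℕ) = 0 then 1 else 0)
    else if 1 ≤ (j:ℕ) ∧ (j:ℕ) ≤ (l:ℕ) then 1 else 0

def Mmat (m k : ℕ) : Matrix (Fin m) (Fin m) ℤ :=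
  Matrix.of fun i j =>
    if (i : ℕ) = 0 then
      (if (j : ℕ) = 0 then (-1 : ℤ) else if (j : ℕ) = m - 1 then 1 else 0)
    else if (i : ℕ) = 1 then
      (if (j : ℕ) = 0 then 2 * (k : ℤ) else if (j : ℕ) = 1 then -1 else 0)
    else
      (if (j : ℕ) = 0 then (k : ℤ) else if (j : ℕ) + 1 = (i : ℕ) then 1
       else if (j : ℕ) = (i : ℕ) then -1 else 0)

def Nmat (m k : ℕ) : Matrix (Fin m) (Fin m) ℤ :=
  Matrix.of fun i l =>
    if (l:ℕ) = 0 then (if (i:ℕ) = 0 then -1 else if (i:ℕ) = 1 then 2*(k:ℤ) else (k:ℤ))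
    else if (i:ℕ) = 0 then (if (l:ℕ) = m - 1 then 1 else 0)
    else if (i:ℕ) = 1 then -1
    else if (l:ℕ) + 1 = (i:ℕ) then 1 else 0

lemma mul_U (n k : ℕ) : Mmat (n+2) k * Umat (n+2) = Nmat (n+2) k := by
  ext i l
  rw [Matrix.mul_apply]
  have hl := l.isLt
  by_cases hi0 : (i:ℕ) = 0
  · have hdec : ∀ j : Fin (n+2), Mmat (n+2) k i j * Umat (n+2) j l =
        (if (j:ℕ) = 0 then (-1) * Umat (n+2) j l else 0) +
        (if (j:ℕ) = n+1 then 1 * Umat (n+2) j l else 0) := by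
      intro j
      simp only [Mmat, Matrix.of_apply, hi0]
      split_ifs <;> first | ring1 | omega | (exfalso; omega) | (exact False.elim (by assumption))
    rw [Finset.sum_congr rfl fun j _ => hdec j, Finset.sum_add_distrib,
      fin_sum_ite 0 (fun j => (-1) * Umat (n+2) j l),
      fin_sum_ite (n+1) (fun j => 1 * Umat (n+2) j l)]
    rw [dif_pos (by omega : 0 < n+2), dif_pos (by omega : n+1 < n+2)]
    simp only [Umat, Nmat, Matrix.of_apply, Fin.val_mk, hi0]
    split_ifs <;> first | omega | (exfalso; omega) | (exact False.elim (by assumption))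
  · by_cases hi1 : (i:ℕ) = 1
    · have hdec : ∀ j : Fin (n+2), Mmat (n+2) k i j * Umat (n+2) j l =
          (if (j:ℕ) = 0 then (2*(k:ℤ)) * Umat (n+2) j l else 0) +
          (if (j:ℕ) = 1 then (-1) * Umat (n+2) j l else 0) := by
        intro j
        simp only [Mmat, Matrix.of_apply, hi0, hi1]
        split_ifs <;> first | ring1 | omega | (exfalso; omega) | (exact False.elim (by assumption))
      rw [Finset.sum_congr rfl fun j _ => hdec j, Finset.sum_add_distrib,
        fin_sum_ite 0 (fun j => (2*(k:ℤ)) * Umat (n+2) j l),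
        fin_sum_ite 1 (fun j => (-1) * Umat (n+2) j l)]
      rw [dif_pos (by omega : 0 < n+2), dif_pos (by omega : 1 < n+2)]
      simp only [Umat, Nmat, Matrix.of_apply, Fin.val_mk, hi0, hi1]
      split_ifs <;> first | omega | (exfalso; omega) | (exact False.elim (by assumption))
    · obtain ⟨a, ha⟩ : ∃ a, (i:ℕ) = a + 2 := ⟨(i:ℕ) - 2, by omega⟩
      have hdec : ∀ j : Fin (n+2), Mmat (n+2) k i j * Umat (n+2) j l =
          (if (j:ℕ) = 0 then (k:ℤ) * Umat (n+2) j l else 0) +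
          (if (j:ℕ) = a+1 then 1 * Umat (n+2) j l else 0) +
          (if (j:ℕ) = a+2 then (-1) * Umat (n+2) j l else 0) := by
        intro j
        simp only [Mmat, Matrix.of_apply, ha]
        split_ifs <;> first | ring1 | omega | (exfalso; omega) | (exact False.elim (by assumption))
      rw [Finset.sum_congr rfl fun j _ => hdec j, Finset.sum_add_distrib,
        Finset.sum_add_distrib,
        fin_sum_ite 0 (fun j => (k:ℤ) * Umat (n+2) j l),
        fin_sum_ite (a+1) (fun j => 1 * Umat (n+2) j l),
        fin_sum_ite (a+2) (fun j => (-1) * Umat (n+2) j l)]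
      have hia := i.isLt
      rw [dif_pos (by omega : 0 < n+2), dif_pos (by omega : a+1 < n+2),
        dif_pos (by omega : a+2 < n+2)]
      simp only [Umat, Nmat, Matrix.of_apply, Fin.val_mk, ha]
      split_ifs <;> first | omega | (exfalso; omega) | (exact False.elim (by assumption))

lemma Umat_det (m : ℕ) : (Umat m).det = 1 := by
  rw [Matrix.det_of_upperTriangular (M := Umat m)]
  · apply Finset.prod_eq_one
    intro j _
    simp only [Umat, Matrix.of_apply]
    split_ifs <;> omega
  · intro i j hij
    have h : (j:ℕ) < (i:ℕ) := hij
    simp only [Umat, Matrix.of_apply]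
    split_ifs <;> omega

def Tmat (n k : ℕ) : Matrix (Fin (n+2)) (Fin (n+2)) ℤ :=
  Matrix.of fun r l =>
    if (r:ℕ) = 0 then (if (l:ℕ) = 0 then -1 else if (l:ℕ) = n+2-1 then 1 else 0)
    else if (r:ℕ) = 1 then (if (l:ℕ) = 0 then ((n:ℤ)+2) * (k:ℤ) - 1 else 0)
    else (if (l:ℕ) = 0 then (k:ℤ) else if (l:ℕ) + 1 = (r:ℕ) then 1 else 0)

lemma T_eq (n k : ℕ) :
    (Nmat (n+2) k).updateRow 1 (∑ i, Nmat (n+2) k i) = Tmat n k := by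
  ext r l
  have hl := l.isLt
  rcases eq_or_ne r 1 with rfl | hr
  · rw [Matrix.updateRow_self]
    have hsa : (∑ i, Nmat (n+2) k i) l = ∑ i, Nmat (n+2) k i l := Finset.sum_apply _ _ _
    rw [hsa]
    by_cases hl0 : (l:ℕ) = 0
    · have hdec : ∀ i : Fin (n+2), Nmat (n+2) k i l =
          ((k:ℤ) + (if (i:ℕ) = 0 then (-1-(k:ℤ)) else 0)) + (if (i:ℕ) = 1 then (k:ℤ) else 0) := by
        intro i
        simp only [Nmat, Matrix.of_apply, hl0]
        split_ifs <;> first | ring1 | omega | (exfalso; omega) | (exact False.elim (by assumption))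
      rw [Finset.sum_congr rfl fun i _ => hdec i, Finset.sum_add_distrib,
        Finset.sum_add_distrib, Finset.sum_const, Finset.card_univ, Fintype.card_fin,
        fin_sum_ite 0 (fun _ => (-1-(k:ℤ))), fin_sum_ite 1 (fun _ => (k:ℤ))]
      rw [dif_pos (by omega : 0 < n+2), dif_pos (by omega : 1 < n+2)]
      simp only [Tmat, Matrix.of_apply, Fin.val_one, hl0, nsmul_eq_mul]
      norm_num
      push_cast
      ring
    · have hdec : ∀ i : Fin (n+2), Nmat (n+2) k i l =
          ((if (i:ℕ) = 0 then (if (l:ℕ) = n+2-1 then (1:ℤ) else 0) else 0) +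
           (if (i:ℕ) = 1 then (-1:ℤ) else 0)) + (if (i:ℕ) = (l:ℕ)+1 then (1:ℤ) else 0) := by
        intro i
        simp only [Nmat, Matrix.of_apply]
        split_ifs <;> first | ring1 | omega | (exfalso; omega) | (exact False.elim (by assumption))
      rw [Finset.sum_congr rfl fun i _ => hdec i, Finset.sum_add_distrib,
        Finset.sum_add_distrib,
        fin_sum_ite 0 (fun _ => (if (l:ℕ) = n+2-1 then (1:ℤ) else 0)),
        fin_sum_ite 1 (fun _ => (-1:ℤ)),
        fin_sum_ite ((l:ℕ)+1) (fun _ => (1:ℤ))]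
      rw [dif_pos (by omega : 0 < n+2), dif_pos (by omega : 1 < n+2)]
      simp only [Tmat, Matrix.of_apply, Fin.val_one]
      split_ifs <;> first | omega | (exfalso; omega) | (exact False.elim (by assumption))
  · rw [Matrix.updateRow_ne hr]
    have hrv : (r:ℕ) ≠ 1 := by simpa [Fin.ext_iff] using hr
    simp only [Nmat, Tmat, Matrix.of_apply]
    split_ifs <;> first | rfl | omega | (exfalso; omega) | (exact False.elim (by assumption))

lemma T_det (n k : ℕ) : (Tmat n k).det = (-1)^(n+1) * (((n:ℤ)+2) * (k:ℤ) - 1) := by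
  rw [Matrix.det_succ_row_zero]
  have key : ∀ j : Fin (n+2),
      (-1:ℤ) ^ (j:ℕ) * Tmat n k 0 j * ((Tmat n k).submatrix Fin.succ j.succAbove).det =
      (if (j:ℕ) = n+1 then (-1:ℤ)^(n+1) * (((n:ℤ)+2) * (k:ℤ) - 1) else 0) := by
    intro j
    have hj2 := j.isLt
    by_cases hj : (j:ℕ) = n+1
    · rw [if_pos hj]
      have hTj : Tmat n k 0 j = 1 := by
        simp only [Tmat, Matrix.of_apply, Fin.val_zero]
        split_ifs <;> omega
      have hjlast : j = Fin.last (n+1) := by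
        apply Fin.ext; simp [Fin.val_last, hj]
      subst hjlast
      rw [hTj, Fin.succAbove_last]
      have htri : ((Tmat n k).submatrix Fin.succ Fin.castSucc).BlockTriangular OrderDual.toDual := by
        intro p q hpq
        have hpq' : (p:ℕ) < (q:ℕ) := hpq
        simp only [Matrix.submatrix_apply, Tmat, Matrix.of_apply, Fin.val_succ,
          Fin.coe_castSucc]
        split_ifs <;> first | rfl | omega | (exfalso; omega) | (exact False.elim (by assumption))
      rw [Matrix.det_of_lowerTriangular _ htri,
        Finset.prod_eq_single (0 : Fin (n+1))
          (fun r _ hr => by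
            have hrv : (r:ℕ) ≠ 0 := fun h => hr (by apply Fin.ext; rw [h, Fin.val_zero])
            have hr2 := r.isLt
            simp only [Matrix.submatrix_apply, Tmat, Matrix.of_apply, Fin.val_succ,
              Fin.coe_castSucc]
            split_ifs <;> first | rfl | omega | (exfalso; omega) | (exact False.elim (by assumption)))
          (fun h => absurd (Finset.mem_univ _) h)]
      simp only [Matrix.submatrix_apply, Tmat, Matrix.of_apply, Fin.succ_zero_eq_one,
        Fin.val_one, Fin.castSucc_zero, Fin.val_zero, Fin.val_last]
      norm_num
    · rw [if_neg hj]
      by_cases hj0 : (j:ℕ) = 0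
      · have hj' : j = 0 := Fin.ext (by simpa using hj0)
        subst hj'
        have hz : ((Tmat n k).submatrix Fin.succ ((0 : Fin (n+2)).succAbove)).det = 0 := by
          apply Matrix.det_eq_zero_of_row_eq_zero 0
          intro c
          simp only [Matrix.submatrix_apply, Fin.zero_succAbove, Fin.succ_zero_eq_one,
            Tmat, Matrix.of_apply, Fin.val_one, Fin.val_succ]
          split_ifs <;> first | rfl | omega | (exfalso; omega) | (exact False.elim (by assumption))
        rw [hz, mul_zero]
      · have hT0 : Tmat n k 0 j = 0 := by
          simp only [Tmat, Matrix.of_apply, Fin.val_zero]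
          split_ifs <;> omega
        rw [hT0, mul_zero, zero_mul]
  rw [Finset.sum_congr rfl fun j _ => key j,
    fin_sum_ite (n+1) (fun _ => (-1:ℤ)^(n+1) * (((n:ℤ)+2) * (k:ℤ) - 1)),
    dif_pos (by omega : n+1 < n+2)]

lemma M_det (n k : ℕ) : (Mmat (n+2) k).det = (-1)^(n+1) * (((n:ℤ)+2) * (k:ℤ) - 1) := by
  have h1 : (Mmat (n+2) k).det = (Nmat (n+2) k).det := by
    rw [← mul_U n k, Matrix.det_mul, Umat_det, mul_one]
  have h2 : (Tmat n k).det = (Nmat (n+2) k).det := by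
    rw [← T_eq n k]
    have h3 := Matrix.det_updateRow_sum (Nmat (n+2) k) 1 (fun _ => (1:ℤ))
    simpa [one_smul] using h3
  rw [h1, ← h2, T_det]

lemma RF_sum (n k : ℕ) (i : Fin (n+2)) :
    ((((n+2)*k : ℕ)):ℤ) - 1 =
      ∑ j : Fin (n+2), Mmat (n+2) k i j *
        (((if (j:ℕ) = 0 then (n+2 : ℕ) else (n+2)*k + (j:ℕ)) : ℕ) : ℤ) := by
  set G : Fin (n+2) → ℤ :=
    fun j => (((if (j:ℕ) = 0 then (n+2 : ℕ) else (n+2)*k + (j:ℕ)) : ℕ) : ℤ) with hG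
  have hG0 : ∀ (c : ℕ) (h : c < n+2), G ⟨c, h⟩ =
      (((if c = 0 then (n+2 : ℕ) else (n+2)*k + c) : ℕ) : ℤ) := by
    intro c h; simp [hG]
  by_cases hi0 : (i:ℕ) = 0
  · have hdec : ∀ j : Fin (n+2), Mmat (n+2) k i j * G j =
        (if (j:ℕ) = 0 then (-1) * G j else 0) +
        (if (j:ℕ) = n+1 then 1 * G j else 0) := by
      intro j
      simp only [Mmat, Matrix.of_apply, hi0]
      split_ifs <;> first | ring1 | omega | (exfalso; omega) | (exact False.elim (by assumption))
    rw [Finset.sum_congr rfl fun j _ => hdec j, Finset.sum_add_distrib,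
      fin_sum_ite 0 (fun j => (-1) * G j), fin_sum_ite (n+1) (fun j => 1 * G j),
      dif_pos (by omega : 0 < n+2), dif_pos (by omega : n+1 < n+2), hG0, hG0,
      if_pos rfl, if_neg (by omega : ¬ n+1 = 0)]
    push_cast
    ring
  · by_cases hi1 : (i:ℕ) = 1
    · have hdec : ∀ j : Fin (n+2), Mmat (n+2) k i j * G j =
          (if (j:ℕ) = 0 then (2*(k:ℤ)) * G j else 0) +
          (if (j:ℕ) = 1 then (-1) * G j else 0) := by
        intro j
        simp only [Mmat, Matrix.of_apply, hi0, hi1]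
        split_ifs <;> first | ring1 | omega | (exfalso; omega) | (exact False.elim (by assumption))
      rw [Finset.sum_congr rfl fun j _ => hdec j, Finset.sum_add_distrib,
        fin_sum_ite 0 (fun j => (2*(k:ℤ)) * G j), fin_sum_ite 1 (fun j => (-1) * G j),
        dif_pos (by omega : 0 < n+2), dif_pos (by omega : 1 < n+2), hG0, hG0,
        if_pos rfl, if_neg (by omega : ¬ 1 = 0)]
      push_cast
      ring
    · obtain ⟨a, ha⟩ : ∃ a, (i:ℕ) = a + 2 := ⟨(i:ℕ) - 2, by omega⟩
      have hia := i.isLt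
      have hdec : ∀ j : Fin (n+2), Mmat (n+2) k i j * G j =
          (if (j:ℕ) = 0 then (k:ℤ) * G j else 0) +
          (if (j:ℕ) = a+1 then 1 * G j else 0) +
          (if (j:ℕ) = a+2 then (-1) * G j else 0) := by
        intro j
        simp only [Mmat, Matrix.of_apply, ha]
        split_ifs <;> first | ring1 | omega | (exfalso; omega) | (exact False.elim (by assumption))
      rw [Finset.sum_congr rfl fun j _ => hdec j, Finset.sum_add_distrib,
        Finset.sum_add_distrib,
        fin_sum_ite 0 (fun j => (k:ℤ) * G j),
        fin_sum_ite (a+1) (fun j => 1 * G j),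
        fin_sum_ite (a+2) (fun j => (-1) * G j),
        dif_pos (by omega : 0 < n+2), dif_pos (by omega : a+1 < n+2),
        dif_pos (by omega : a+2 < n+2), hG0, hG0, hG0,
        if_pos rfl, if_neg (by omega : ¬ a+1 = 0), if_neg (by omega : ¬ a+2 = 0)]
      push_cast
      ring

/-- For `m ≥ 2` and `s` a positive multiple of `m`, the `m × m`
matrix with first row `(-1, 0, …, 0, 1)`, second row `(2s/m, -1, 0, …, 0)`, and
`i`-th row (for `3 ≤ i ≤ m`) having first entry `s/m`, entry `1` in column `i-1`,
entry `-1` in column `i` and `0` elsewhere, has determinant `(-1)^(m-1) * (s-1)`;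
in particular its determinant has absolute value `s-1`.  Moreover it is an
RF-matrix of the Frobenius number `s-1` with respect to the generators
`m, s+1, …, s+m-1` of `S = ⟨m, s+1, …, s+m-1⟩`. (Rows and columns are indexed by
`Fin m`; the paper's index `i ∈ {1, …, m}` corresponds to the Lean index `i - 1`.) -/
theorem arf_multiple_det (m s : ℕ) (hm : 2 ≤ m) (hs : 0 < s) (hdvd : m ∣ s)
    (M : Matrix (Fin m) (Fin m) ℤ)
    (hM : M = Matrix.of fun i j : Fin m =>
      if (i : ℕ) = 0 then
        (if (j : ℕ) = 0 then (-1 : ℤ) else if (j : ℕ) = m - 1 then 1 else 0)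
      else if (i : ℕ) = 1 then
        (if (j : ℕ) = 0 then 2 * (s : ℤ) / (m : ℤ)
         else if (j : ℕ) = 1 then -1 else 0)
      else
        (if (j : ℕ) = 0 then (s : ℤ) / (m : ℤ)
         else if (j : ℕ) + 1 = (i : ℕ) then 1
         else if (j : ℕ) = (i : ℕ) then -1 else 0)) :
    M.det = (-1) ^ (m - 1) * ((s : ℤ) - 1) ∧
    |M.det| = (s : ℤ) - 1 ∧
    IsRFMatrix (fun j : Fin m => if (j : ℕ) = 0 then m else s + (j : ℕ))
      ((s : ℤ) - 1) M := by
  obtain ⟨k, rfl⟩ := hdvd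
  obtain ⟨n, rfl⟩ : ∃ n, m = n + 2 := ⟨m - 2, by omega⟩
  have hk : 1 ≤ k := by
    rcases Nat.eq_zero_or_pos k with h | h
    · subst h; simp at hs
    · exact h
  have hMn : M = Mmat (n+2) k := by
    subst hM
    have d1 : 2 * (((n+2)*k : ℕ) : ℤ) / (((n+2 : ℕ)) : ℤ) = 2*(k:ℤ) := by
      push_cast
      rw [show (2:ℤ) * (((n:ℤ)+2)*(k:ℤ)) = ((n:ℤ)+2) * (2*(k:ℤ)) by ring]
      exact Int.mul_ediv_cancel_left _ (by omega)
    have d2 : (((n+2)*k : ℕ) : ℤ) / (((n+2 : ℕ)) : ℤ) = (k:ℤ) := by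
      push_cast
      exact Int.mul_ediv_cancel_left _ (by omega)
    ext i j
    simp only [Mmat, Matrix.of_apply]
    rw [d1, d2]
  have hdet : M.det = (-1)^(n+1) * (((n:ℤ)+2) * (k:ℤ) - 1) := by
    rw [hMn, M_det]
  have hcast : ((((n+2)*k : ℕ)):ℤ) = ((n:ℤ)+2) * (k:ℤ) := by push_cast; ring
  have h1 : (1:ℤ) ≤ ((n:ℤ)+2) * (k:ℤ) := by
    have hk' : (1:ℤ) ≤ (k:ℤ) := by exact_mod_cast hk
    nlinarith
  refine ⟨?_, ?_, ?_, ?_, ?_⟩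
  · rw [hdet, hcast, show n+2-1 = n+1 from by omega]
  · rw [hdet, abs_mul, abs_pow, abs_neg, abs_one, one_pow, one_mul,
      abs_of_nonneg (by linarith), hcast]
  · intro i
    rw [hMn]
    simp only [Mmat, Matrix.of_apply]
    split_ifs <;> first | omega | (exfalso; omega) | (exact False.elim (by assumption))
  · intro i j hij
    have hv : (i:ℕ) ≠ (j:ℕ) := fun h => hij (Fin.ext h)
    rw [hMn]
    simp only [Mmat, Matrix.of_apply]
    split_ifs <;> first | omega | positivity | (exfalso; omega) | (exact False.elim (by assumption))
  · intro i
    rw [hMn, ← RF_sum n k i]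
end

section
/- Let S be an Arf numerical semigroup minimally generated by n₁ < n₂ < … < n_m with multiplicity m > 5 and conductor s. If M = (a_ij) is any RF-matrix of the Frobenius number s−1, then there exist indices i ≠ i' and an index j in {1, …, m} such that a_ij = a_{i'j} = 0. -/
lemma arf_closed_add : ∀ (N : ℕ) (U : Set ℕ), 0 ∈ U →
    (∀ u ∈ U, ∀ v ∈ U, u ≤ v → 2 * v - u ∈ U) →
    ∀ a b : ℕ, a ∈ U → b ∈ U → a + b ≤ N → a + b ∈ U := by
  intro N
  induction N with
  | zero =>
    intro U h0 _ a b ha hb hab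
    have ha0 : a = 0 := by omega
    have hb0 : b = 0 := by omega
    subst ha0; subst hb0; simpa using h0
  | succ N ih =>
    intro U h0 hcl a b ha hb hab
    have key : ∀ a b : ℕ, a ∈ U → b ∈ U → 0 < a → a ≤ b → a + b ≤ N + 1 → a + b ∈ U := by
      intro a b ha hb hapos hle habN
      set U' : Set ℕ := {t | a + t ∈ U} with hU'
      have h0' : (0 : ℕ) ∈ U' := by
        show a + 0 ∈ U; simpa using ha
      have hcl' : ∀ u ∈ U', ∀ v ∈ U', u ≤ v → 2 * v - u ∈ U' := by
        intro u hu v hv huv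
        show a + (2 * v - u) ∈ U
        have h := hcl (a + u) hu (a + v) hv (by omega)
        have heq : 2 * (a + v) - (a + u) = a + (2 * v - u) := by omega
        rwa [heq] at h
      have ha' : a ∈ U' := by
        show a + a ∈ U
        have h := hcl 0 h0 a ha (Nat.zero_le _)
        have heq : 2 * a - 0 = a + a := by omega
        rwa [heq] at h
      have hb' : b - a ∈ U' := by
        show a + (b - a) ∈ U
        rwa [Nat.add_sub_cancel' hle]
      have h := ih U' h0' hcl' a (b - a) ha' hb' (by omega)
      have h2 : a + (a + (b - a)) ∈ U := h
      have heq : a + (a + (b - a)) = a + b := by omega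
      rwa [heq] at h2
    rcases Nat.eq_zero_or_pos a with rfl | hapos
    · simpa using hb
    rcases Nat.eq_zero_or_pos b with rfl | hbpos
    · simpa using ha
    rcases le_total a b with h | h
    · exact key a b ha hb hapos h hab
    · have := key b a hb ha hbpos h (by omega)
      rwa [add_comm] at this


/-- Let `S` be an Arf numerical semigroup minimally generated by
`n 0 < n 1 < … < n (m-1)` with multiplicity `m > 5` and conductor `s` (Arf semigroups
have maximal embedding dimension, so the number of minimal generators is `m`). Then any
RF-matrix `A` of the Frobenius number `s - 1` has two zero entries in a common column:
there are `i ≠ i'` and `j` with `A i j = A i' j = 0`. -/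
theorem arf_big_mult_zero_column (S : Set ℕ) (m s : ℕ)
    (hNS : IsNumericalSemigroup S) (hArf : IsArf S)
    (hmul : HasMultiplicity S m) (hm : 5 < m)
    (hcon : HasConductor S s)
    (n : Fin m → ℕ) (hmono : StrictMono n)
    (hgen : S = (AddSubmonoid.closure (Set.range n) : Set ℕ))
    (hmin : ∀ T : Set ℕ, T ⊆ Set.range n →
      S = (AddSubmonoid.closure T : Set ℕ) → T = Set.range n)
    (A : Matrix (Fin m) (Fin m) ℤ)
    (hA : IsRFMatrix n ((s : ℤ) - 1) A) :
    ∃ i i' j : Fin m, i ≠ i' ∧ A i j = 0 ∧ A i' j = 0 := by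
  obtain ⟨hA1, hA2, hA3⟩ := hA
  obtain ⟨hmS, hm0, hmmin⟩ := hmul
  have hnS : ∀ j, n j ∈ S := fun j => by
    rw [hgen]; exact AddSubmonoid.subset_closure (Set.mem_range_self j)
  have h1S : (1 : ℕ) ∉ S := fun h => by have := hmmin 1 h one_ne_zero; omega
  have hs2 : 2 ≤ s := by
    by_contra h
    exact h1S (hcon.1 1 (by omega))
  have hfS : s - 1 ∉ S := by
    intro h
    have hall : ∀ k, s - 1 ≤ k → k ∈ S := by
      intro k hk
      rcases eq_or_lt_of_le hk with rfl | hk'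
      · exact h
      · exact hcon.1 k (by omega)
    have := hcon.2 (s - 1) hall
    omega
  -- no generator is a sum of two nonzero elements of S
  have hgns : ∀ (i : Fin m) (x y : ℕ), x ∈ S → y ∈ S → x ≠ 0 → y ≠ 0 → n i ≠ x + y := by
    intro i x y hx hy hx0 hy0 heq
    set T : Set ℕ := Set.range n \ {n i} with hT
    have hTsub : T ⊆ Set.range n := Set.diff_subset
    have hsmall : ∀ z, z ∈ S → z < n i → z ∈ AddSubmonoid.closure T := by
      intro z hz hlt
      rw [hgen] at hz
      obtain ⟨l, hl, hsum⟩ := AddSubmonoid.exists_multiset_of_mem_closure hz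
      rw [← hsum]
      refine AddSubmonoid.multiset_sum_mem _ l (fun w hw => AddSubmonoid.subset_closure ?_)
      refine ⟨hl w hw, fun hmem => ?_⟩
      have hle : w ≤ l.sum := Multiset.single_le_sum (fun x _ => Nat.zero_le x) w hw
      rw [Set.mem_singleton_iff] at hmem
      omega
    have hx' : x ∈ AddSubmonoid.closure T := hsmall x hx (by omega)
    have hy' : y ∈ AddSubmonoid.closure T := hsmall y hy (by omega)
    have hni : n i ∈ AddSubmonoid.closure T := heq ▸ add_mem hx' hy'
    have hclT : S = (AddSubmonoid.closure T : Set ℕ) := by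
      rw [hgen]
      refine congrArg _ (le_antisymm ?_ (AddSubmonoid.closure_mono hTsub))
      rw [AddSubmonoid.closure_le]
      rintro z ⟨j, rfl⟩
      by_cases h : n j = n i
      · rw [h]; exact hni
      · exact AddSubmonoid.subset_closure ⟨⟨j, rfl⟩, h⟩
    have hTeq := hmin T hTsub hclT
    have : n i ∈ T := hTeq ▸ Set.mem_range_self i
    exact this.2 rfl
  have hnne : ∀ j, n j ≠ 0 := by
    intro j hj
    set T : Set ℕ := Set.range n \ {0} with hT
    have hTsub : T ⊆ Set.range n := Set.diff_subset
    have hclT : S = (AddSubmonoid.closure T : Set ℕ) := by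
      rw [hgen]
      refine congrArg _ (le_antisymm ?_ (AddSubmonoid.closure_mono hTsub))
      rw [AddSubmonoid.closure_le]
      rintro z ⟨k, rfl⟩
      by_cases h : n k = 0
      · rw [h]; exact zero_mem _
      · exact AddSubmonoid.subset_closure ⟨⟨k, rfl⟩, h⟩
    have hTeq := hmin T hTsub hclT
    have : n j ∈ T := hTeq ▸ Set.mem_range_self j
    exact this.2 hj
  have hmge : ∀ j, m ≤ n j := fun j => hmmin (n j) (hnS j) (hnne j)
  -- strictly bigger than m for positive indices
  have hgt : ∀ j : Fin m, 0 < (j : ℕ) → m + 1 ≤ n j := by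
    intro j hj
    have h0 : (⟨0, by omega⟩ : Fin m) < j := by
      rw [Fin.lt_def]; simpa using hj
    have := hmono h0
    have := hmge ⟨0, by omega⟩
    omega
  -- MED property from Arf
  have hMED : ∀ x y : ℕ, x ∈ S → y ∈ S → m ≤ x → m ≤ y → x + y - m ∈ S := by
    intro x y hx hy hxm hym
    have hcl : ∀ u ∈ {t : ℕ | m + t ∈ S}, ∀ v ∈ {t : ℕ | m + t ∈ S}, u ≤ v →
        2 * v - u ∈ {t : ℕ | m + t ∈ S} := by
      intro u hu v hv huv
      show m + (2 * v - u) ∈ S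
      have h := hArf (m + u) hu (m + v) hv (by omega)
      have heq : 2 * (m + v) - (m + u) = m + (2 * v - u) := by omega
      rwa [heq] at h
    have h0 : (0 : ℕ) ∈ {t : ℕ | m + t ∈ S} := by show m + 0 ∈ S; simpa using hmS
    have hxU : x - m ∈ {t : ℕ | m + t ∈ S} := by
      show m + (x - m) ∈ S; rwa [Nat.add_sub_cancel' hxm]
    have hyU : y - m ∈ {t : ℕ | m + t ∈ S} := by
      show m + (y - m) ∈ S; rwa [Nat.add_sub_cancel' hym]
    have h := arf_closed_add (x + y) _ h0 hcl (x - m) (y - m) hxU hyU (by omega)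
    have h2 : m + (x - m + (y - m)) ∈ S := h
    have heq : m + (x - m + (y - m)) = x + y - m := by omega
    rwa [heq] at h2
  -- the largest generator equals s - 1 + m
  have hfm : s - 1 + m ∈ S := hcon.1 _ (by omega)
  set L : Fin m := ⟨m - 1, by omega⟩ with hL
  have hjleL : ∀ j : Fin m, n j ≤ n L := by
    intro j
    apply hmono.monotone
    rw [Fin.le_def]
    have := j.isLt
    simp only [hL]
    omega
  have hLle : n L ≤ s - 1 + m := by
    by_contra h
    push_neg at h
    have hmem : n L - m ∈ S := hcon.1 _ (by omega)
    exact hgns L m (n L - m) hmS hmem hm0 (by have := hmge L; omega) (by have := hmge L; omega)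
  have hexk : ∃ k : Fin m, n k = s - 1 + m := by
    have h1 := hfm
    rw [hgen] at h1
    obtain ⟨l, hl, hsum⟩ := AddSubmonoid.exists_multiset_of_mem_closure h1
    have hlne : l ≠ 0 := by
      intro h
      rw [h] at hsum
      simp at hsum
      omega
    obtain ⟨w, hw⟩ := Multiset.exists_mem_of_ne_zero hlne
    obtain ⟨k, hk⟩ := hl w hw
    have hsum2 : w + (l.erase w).sum = s - 1 + m := by
      rw [← Multiset.sum_cons, Multiset.cons_erase hw, hsum]
    have hl'S : (l.erase w).sum ∈ S := by
      rw [hgen]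
      exact AddSubmonoid.multiset_sum_mem _ _
        (fun z hz => AddSubmonoid.subset_closure (hl z (Multiset.mem_of_mem_erase hz)))
    by_cases hl0 : (l.erase w).sum = 0
    · exact ⟨k, by omega⟩
    · exfalso
      have hwm : m ≤ w := hk ▸ hmge k
      have hrm : m ≤ (l.erase w).sum := hmmin _ hl'S hl0
      have := hMED w (l.erase w).sum (hk ▸ hnS k) hl'S hwm hrm
      have heq : w + (l.erase w).sum - m = s - 1 := by omega
      rw [heq] at this
      exact hfS this
  have hnL : n L = s - 1 + m := by
    obtain ⟨k, hk⟩ := hexk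
    have := hjleL k
    omega
  -- the key column claim
  have hcol : ∀ i : Fin m, 0 < (i : ℕ) → (i : ℕ) < m - 1 → A i L = 0 := by
    intro i hi0 hiLv
    have hiL : i ≠ L := by
      intro h
      rw [Fin.ext_iff] at h
      simp only [hL] at h
      omega
    have hrow := hA3 i
    have hLmem : L ∈ Finset.univ.erase i := Finset.mem_erase.2 ⟨(Ne.symm hiL), Finset.mem_univ _⟩
    have hd1 : ∑ j, A i j * (n j : ℤ)
        = A i i * (n i : ℤ) + ∑ j ∈ Finset.univ.erase i, A i j * (n j : ℤ) :=
      (Finset.add_sum_erase _ _ (Finset.mem_univ i)).symm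
    have hd2 : ∑ j ∈ Finset.univ.erase i, A i j * (n j : ℤ)
        = A i L * (n L : ℤ) + ∑ j ∈ (Finset.univ.erase i).erase L, A i j * (n j : ℤ) :=
      (Finset.add_sum_erase _ _ hLmem).symm
    set t : ℕ := ∑ j ∈ (Finset.univ.erase i).erase L, (A i j).toNat * n j with ht
    have hjne : ∀ j ∈ (Finset.univ.erase i).erase L, i ≠ j := by
      intro j hj
      exact Ne.symm (Finset.mem_erase.1 (Finset.mem_erase.1 hj).2).1
    have htR : (t : ℤ) = ∑ j ∈ (Finset.univ.erase i).erase L, A i j * (n j : ℤ) := by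
      rw [ht, Nat.cast_sum]
      refine Finset.sum_congr rfl (fun j hj => ?_)
      push_cast
      rw [Int.toNat_of_nonneg (hA2 i j (hjne j hj))]
    have htS : t ∈ S := by
      rw [hgen, ht]
      refine AddSubmonoid.sum_mem _ (fun j _ => ?_)
      have h := AddSubmonoid.nsmul_mem (AddSubmonoid.closure (Set.range n))
        (AddSubmonoid.subset_closure (Set.mem_range_self j)) ((A i j).toNat)
      simpa [nsmul_eq_mul] using h
    have heq1 : (s : ℤ) - 1 = -(n i : ℤ) + A i L * (n L : ℤ) + (t : ℤ) := by
      rw [hrow, hd1, hd2, hA1 i, htR]; ring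
    have haLnn : (0 : ℤ) ≤ A i L := hA2 i L hiL
    have hniL : (n i : ℤ) ≤ (n L : ℤ) := by exact_mod_cast hjleL i
    have hnLZ : (n L : ℤ) = (s : ℤ) - 1 + m := by
      rw [hnL]; push_cast [Nat.cast_sub (by omega : 1 ≤ s)]; ring
    have htnn : (0 : ℤ) ≤ (t : ℤ) := Int.natCast_nonneg t
    have hmZ : (6 : ℤ) ≤ m := by exact_mod_cast hm
    have hsZ : (2 : ℤ) ≤ s := by exact_mod_cast hs2
    have hc1 : A i L ≤ 1 := by
      by_contra hc
      push_neg at hc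
      have h2 : 2 * (n L : ℤ) ≤ A i L * (n L : ℤ) :=
        mul_le_mul_of_nonneg_right (by omega) (Int.natCast_nonneg _)
      linarith
    rcases eq_or_lt_of_le hc1 with hc | hc
    · exfalso
      rw [hc] at heq1
      have hni1 : m + 1 ≤ n i := hgt i hi0
      have hniZ : (m : ℤ) + 1 ≤ (n i : ℤ) := by exact_mod_cast hni1
      have htval : (t : ℤ) = (n i : ℤ) - m := by linarith
      have htnat : n i = m + t := by omega
      have ht0 : t ≠ 0 := by omega
      exact hgns i m t hmS htS hm0 ht0 htnat
    · omega
  refine ⟨⟨1, by omega⟩, ⟨2, by omega⟩, L, ?_, hcol ⟨1, by omega⟩ (by simp) (by simp; omega),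
    hcol ⟨2, by omega⟩ (by simp) (by simp; omega)⟩
  intro h
  rw [Fin.ext_iff] at h
  simp at h
end

section
/- Let S be an Arf numerical semigroup with multiplicity m(S) ≥ 2 and let k be a field. Then the defining ideal I_S of k[S] is generic if and only if m(S) ≤ 3. -/
/-- The defining ideal `I_S` of `k[S]`: the kernel of
`k[x₁, …, x_e] → k[t]`, `x_i ↦ t^(n i)`. -/
noncomputable def definingIdeal (k : Type*) [Field k] {e : ℕ} (n : Fin e → ℕ) :
    Ideal (MvPolynomial (Fin e) k) :=
  RingHom.ker (MvPolynomial.aeval (R := k)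
    (fun i : Fin e => (Polynomial.X : Polynomial k) ^ n i)).toRingHom

set_option linter.unusedSectionVars false
set_option maxHeartbeats 1000000

open MvPolynomial

namespace ArfAux

variable {k : Type*} [Field k] {m : ℕ}

/-- S-degree of an exponent vector. -/
def sdeg (n : Fin m → ℕ) (a : Fin m → ℕ) : ℕ := ∑ i, a i * n i

/-- The monomial x^a. -/
noncomputable def mono (k : Type*) [Field k] (a : Fin m → ℕ) : MvPolynomial (Fin m) k :=
  ∏ i, X i ^ a i

lemma mono_add (a b : Fin m → ℕ) : mono k (a + b) = mono k a * mono k b := by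
  simp [mono, pow_add, Finset.prod_mul_distrib]

lemma sdeg_add (n a b : Fin m → ℕ) : sdeg n (a + b) = sdeg n a + sdeg n b := by
  simp [sdeg, add_mul, Finset.sum_add_distrib]

lemma mono_eq_monomial (a : Fin m → ℕ) :
    mono k a = monomial (Finsupp.equivFunOnFinite.symm a) 1 := by
  rw [← prod_X_pow_eq_monomial]
  rw [mono]
  rw [← Finset.prod_subset (Finset.subset_univ (Finsupp.equivFunOnFinite.symm a).support)]
  · rfl
  · intro x _ hx
    simp only [Finsupp.notMem_support_iff] at hx
    rw [show (Finsupp.equivFunOnFinite.symm a) x = a x from rfl] at hx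
    simp [hx]

lemma coeff_mono (a : Fin m → ℕ) (u : Fin m →₀ ℕ) :
    coeff u (mono k a) = if (Finsupp.equivFunOnFinite.symm a) = u then 1 else 0 := by
  classical
  rw [mono_eq_monomial, coeff_monomial]

/-- The defining map. -/
noncomputable def φ (k : Type*) [Field k] (n : Fin m → ℕ) :
    MvPolynomial (Fin m) k →ₐ[k] Polynomial k :=
  MvPolynomial.aeval (fun i : Fin m => (Polynomial.X : Polynomial k) ^ n i)

lemma aeval_mono (n a : Fin m → ℕ) : φ k n (mono k a) = Polynomial.X ^ sdeg n a := by
  rw [mono, φ, map_prod, sdeg, ← Finset.prod_pow_eq_pow_sum]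
  apply Finset.prod_congr rfl
  intro i _
  rw [map_pow, aeval_X, ← pow_mul, mul_comm]

end ArfAux

namespace ArfAux2
open ArfAux

variable {k : Type*} [Field k] {m : ℕ}

lemma mem_definingIdeal_iff (n : Fin m → ℕ) (p : MvPolynomial (Fin m) k) :
    p ∈ definingIdeal k n ↔ φ k n p = 0 := Iff.rfl

lemma binom_mem (n : Fin m → ℕ) {a b : Fin m → ℕ} (h : sdeg n a = sdeg n b) :
    mono k a - mono k b ∈ definingIdeal k n := by
  rw [mem_definingIdeal_iff, map_sub, aeval_mono, aeval_mono, h, sub_self]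

lemma sdeg_eq_of_binom_mem (n : Fin m → ℕ) {a b : Fin m → ℕ}
    (h : mono k a - mono k b ∈ definingIdeal k n) : sdeg n a = sdeg n b := by
  rw [mem_definingIdeal_iff, map_sub, aeval_mono, aeval_mono, sub_eq_zero] at h
  by_contra hne
  have h2 := congrArg (fun q => Polynomial.coeff q (sdeg n a)) h
  simp only [Polynomial.coeff_X_pow, if_true, eq_self_iff_true] at h2
  rw [if_neg (fun hh => hne hh)] at h2
  exact one_ne_zero h2

/-- key extraction: if `p ∈ I` and `u ∈ p.support` then there is another monomial
of the same `sdeg` in the support. -/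
lemma exists_other (n : Fin m → ℕ) {p : MvPolynomial (Fin m) k}
    (hp : p ∈ definingIdeal k n) {u : Fin m →₀ ℕ} (hu : u ∈ p.support) :
    ∃ v ∈ p.support, v ≠ u ∧ sdeg n ⇑v = sdeg n ⇑u := by
  classical
  rw [mem_definingIdeal_iff] at hp
  have hsum : ∑ v ∈ p.support, (coeff v p) • (Polynomial.X (R := k)) ^ sdeg n ⇑v = 0 := by
    have := congrArg (φ k n) (as_sum p).symm
    rw [hp, map_sum] at this
    rw [← this]
    apply Finset.sum_congr rfl
    intro v _
    have hmc : mono k ⇑v = monomial v 1 := by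
      rw [mono_eq_monomial, Finsupp.equivFunOnFinite_symm_coe]
    have : (monomial v) (coeff v p) = (C (coeff v p)) * mono k ⇑v := by
      rw [hmc, C_mul_monomial, mul_one]
    rw [this, map_mul, aeval_mono, algHom_C, Polynomial.smul_eq_C_mul,
      Polynomial.algebraMap_eq]
  by_contra hcon
  push_neg at hcon
  have hco := congrArg (fun q => Polynomial.coeff q (sdeg n ⇑u)) hsum
  simp only [Polynomial.finset_sum_coeff, Polynomial.coeff_smul, Polynomial.coeff_X_pow,
    smul_eq_mul, mul_ite, mul_one, mul_zero, Polynomial.coeff_zero] at hco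
  rw [Finset.sum_eq_single u] at hco
  · rw [if_pos rfl] at hco
    exact (mem_support_iff.mp hu) hco
  · intro v hv hvu
    exact if_neg (fun hh => hcon v hv hvu hh.symm)
  · intro h
    exact absurd hu h
end ArfAux2

namespace ArfAux3
open ArfAux

variable {m : ℕ}

/-- unit vector -/
def e (i : Fin m) : Fin m → ℕ := fun j => if j = i then 1 else 0

lemma sdeg_e (n : Fin m → ℕ) (i : Fin m) : sdeg n (e i) = n i := by
  rw [sdeg, Finset.sum_eq_single i]
  · simp [e]
  · intro j _ hj; simp [e, hj]
  · simp

lemma mem_closure_iff_rep {n : Fin m → ℕ} {s : ℕ} :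
    s ∈ AddSubmonoid.closure (Set.range n) ↔ ∃ c : Fin m → ℕ, s = sdeg n c := by
  constructor
  · intro hs
    induction hs using AddSubmonoid.closure_induction with
    | mem x hx =>
      obtain ⟨i, rfl⟩ := hx
      exact ⟨e i, (sdeg_e n i).symm⟩
    | zero => exact ⟨0, by simp [sdeg]⟩
    | add x y _ _ hx hy =>
      obtain ⟨c, rfl⟩ := hx
      obtain ⟨d, rfl⟩ := hy
      exact ⟨c + d, (sdeg_add n c d).symm⟩
  · rintro ⟨c, rfl⟩
    rw [sdeg]
    apply AddSubmonoid.sum_mem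
    intro i _
    have hni : n i ∈ AddSubmonoid.closure (Set.range n) :=
      AddSubmonoid.subset_closure ⟨i, rfl⟩
    simpa [smul_eq_mul] using nsmul_mem hni (c i)

lemma sdeg_ge (n c : Fin m → ℕ) (i : Fin m) : c i * n i ≤ sdeg n c := by
  rw [sdeg]
  exact Finset.single_le_sum (f := fun j => c j * n j) (fun j _ => Nat.zero_le _)
    (Finset.mem_univ i)

lemma sdeg_ge' (n c : Fin m → ℕ) {i : Fin m} (h : 0 < c i) : n i ≤ sdeg n c :=
  le_trans (Nat.le_mul_of_pos_left _ h) (sdeg_ge n c i)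

section Gens

variable {S : Set ℕ} {n : Fin m → ℕ}
  (hmono : StrictMono n)
  (hgen : S = (AddSubmonoid.closure (Set.range n) : Set ℕ))
  (hmin : ∀ T : Set ℕ, T ⊆ Set.range n →
      S = (AddSubmonoid.closure T : Set ℕ) → T = Set.range n)

include hmono hgen hmin

lemma drop_gen (i : Fin m)
    (h : n i ∈ AddSubmonoid.closure (Set.range n \ {n i})) : False := by
  set T : Set ℕ := Set.range n \ {n i} with hT
  have hsub : T ⊆ Set.range n := Set.diff_subset
  have hST : S = (AddSubmonoid.closure T : Set ℕ) := by
    rw [hgen]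
    apply le_antisymm
    · apply AddSubmonoid.closure_le.mpr
      rintro x ⟨j, rfl⟩
      by_cases hj : n j = n i
      · rw [hj]; exact h
      · exact AddSubmonoid.subset_closure ⟨⟨j, rfl⟩, hj⟩
    · exact AddSubmonoid.closure_mono hsub
  have := hmin T hsub hST
  have hni : n i ∈ T := this ▸ ⟨i, rfl⟩
  exact hni.2 rfl

lemma n_pos (i : Fin m) : 0 < n i := by
  rcases Nat.eq_zero_or_pos (n i) with h | h
  · exact absurd (h ▸ (AddSubmonoid.closure (Set.range n \ {n i})).zero_mem)
      (fun hh => (drop_gen hmono hgen hmin i hh).elim)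
  · exact h

lemma sdeg_zero_iff (c : Fin m → ℕ) : sdeg n c = 0 ↔ c = 0 := by
  constructor
  · intro h
    funext i
    have := sdeg_ge n c i
    rw [h, Nat.le_zero, Nat.mul_eq_zero] at this
    rcases this with h1 | h1
    · exact h1
    · have := n_pos hmono hgen hmin i
      omega
  · rintro rfl; simp [sdeg]

/-- `n i` is not in the monoid generated by the other generators; in particular
any representation of `n i` is the unit vector. -/
lemma rep_of_gen {c : Fin m → ℕ} (i : Fin m) (h : sdeg n c = n i) : c = e i := by
  classical
  by_cases hci : c i = 0
  · exfalso
    apply drop_gen hmono hgen hmin i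
    have hmem : sdeg n c ∈ AddSubmonoid.closure (Set.range n \ {n i}) := by
      rw [sdeg]
      apply AddSubmonoid.sum_mem
      intro j _
      by_cases hji : j = i
      · rw [hji, hci]
        simpa using (AddSubmonoid.closure (Set.range n \ {n i})).zero_mem
      · have hnj : n j ∈ Set.range n \ {n i} :=
          ⟨⟨j, rfl⟩, fun hh => hji (hmono.injective hh)⟩
        simpa [smul_eq_mul] using nsmul_mem (AddSubmonoid.subset_closure hnj) (c j)
    exact h ▸ hmem
  · have hci1 : c i = 1 := by
      by_contra hne
      have h2 : 2 ≤ c i := by omega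
      have : 2 * n i ≤ sdeg n c :=
        le_trans (Nat.mul_le_mul_right _ h2) (sdeg_ge n c i)
      rw [h] at this
      have := n_pos hmono hgen hmin i
      omega
    funext j
    by_cases hji : j = i
    · rw [hji, hci1]; simp [e]
    · simp only [e, if_neg hji, Pi.zero_apply]
      by_contra hcj
      have hcj' : 0 < c j := Nat.pos_of_ne_zero hcj
      have hij : i ≠ j := fun hh => hji hh.symm
      have h1 : c i * n i + c j * n j ≤ sdeg n c := by
        have hp := Finset.sum_pair (f := fun x => c x * n x) hij
        rw [sdeg, ← hp]
        exact Finset.sum_le_sum_of_subset (Finset.subset_univ _)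
      have h3 := n_pos hmono hgen hmin j
      have h4 : 1 ≤ c j * n j := Nat.one_le_iff_ne_zero.mpr (by positivity)
      rw [h, hci1, one_mul] at h1
      omega

end Gens
end ArfAux3

namespace ArfAux4
open ArfAux ArfAux3

variable {k : Type*} [Field k] {m : ℕ}

lemma coeff_mono_coe (u w : Fin m →₀ ℕ) :
    coeff w (mono k ⇑u) = if u = w then 1 else 0 := by
  rw [coeff_mono, Finsupp.equivFunOnFinite_symm_coe]

/-- If every binomial of the kernel lies in the span of `FSet`, so does every kernel elt. -/
lemma span_of_binomials (n : Fin m → ℕ) (FSet : Set (MvPolynomial (Fin m) k))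
    (hbin : ∀ a b : Fin m → ℕ, sdeg n a = sdeg n b →
      mono k a - mono k b ∈ Ideal.span FSet) :
    ∀ p ∈ definingIdeal k n, p ∈ Ideal.span FSet := by
  classical
  intro p hp
  generalize hN : p.support.card = N
  induction N using Nat.strong_induction_on generalizing p with
  | _ N IH =>
  by_cases h0 : p = 0
  · simp [h0]
  · have hne : p.support.Nonempty := MvPolynomial.support_nonempty.mpr h0
    obtain ⟨u, hu⟩ := hne
    obtain ⟨v, hv, hvu, hdeg⟩ := ArfAux2.exists_other n hp hu
    set c := coeff u p with hc
    set B : MvPolynomial (Fin m) k := mono k ⇑u - mono k ⇑v with hB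
    have hBI : B ∈ definingIdeal k n := ArfAux2.binom_mem n hdeg.symm
    set q := p - C c * B with hq
    have hq_mem : q ∈ definingIdeal k n :=
      Submodule.sub_mem _ hp (Ideal.mul_mem_left _ _ hBI)
    have hcoeffq : ∀ w, coeff w q = coeff w p - c * ((if u = w then 1 else 0)
        - (if v = w then 1 else 0)) := by
      intro w
      rw [hq, coeff_sub, coeff_C_mul, hB, coeff_sub, coeff_mono_coe, coeff_mono_coe]
    have hsupp : q.support ⊆ p.support.erase u := by
      intro w hw
      rw [MvPolynomial.mem_support_iff] at hw
      rw [Finset.mem_erase]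
      constructor
      · rintro rfl
        rw [hcoeffq, if_pos rfl, if_neg hvu] at hw
        simp [hc] at hw
      · by_cases hwv : w = v
        · exact hwv ▸ hv
        · rw [MvPolynomial.mem_support_iff]
          rw [hcoeffq] at hw
          intro hzero
          apply hw
          rw [hzero]
          by_cases hwu : u = w
          · exfalso
            rw [← hwu] at hzero
            exact (MvPolynomial.mem_support_iff.mp hu) hzero
          · rw [if_neg hwu, if_neg (fun hh => hwv hh.symm)]
            ring
    have hcard : q.support.card < N := by
      have h1 : q.support.card ≤ (p.support.erase u).card := Finset.card_le_card hsupp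
      have h2 : (p.support.erase u).card = N - 1 := by
        rw [Finset.card_erase_of_mem hu, hN]
      have h3 : 1 ≤ N := by
        rw [← hN]
        exact Finset.card_pos.mpr ⟨u, hu⟩
      omega
    have hqspan : q ∈ Ideal.span FSet := IH q.support.card hcard q hq_mem rfl
    have : p = q + C c * B := by rw [hq]; ring
    rw [this]
    exact Submodule.add_mem _ hqspan (Ideal.mul_mem_left _ _ (hbin ⇑u ⇑v hdeg.symm))

section SGens

variable {S : Set ℕ} {n : Fin m → ℕ}
  (hmono : StrictMono n)
  (hgen : S = (AddSubmonoid.closure (Set.range n) : Set ℕ))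
  (hmin : ∀ T : Set ℕ, T ⊆ Set.range n →
      S = (AddSubmonoid.closure T : Set ℕ) → T = Set.range n)

include hmono hgen hmin

lemma n_mem_S (i : Fin m) : n i ∈ S := by
  rw [hgen]
  exact AddSubmonoid.subset_closure ⟨i, rfl⟩

lemma rep_exists {s : ℕ} (hs : s ∈ S) : ∃ c : Fin m → ℕ, s = sdeg n c := by
  rw [hgen] at hs
  exact mem_closure_iff_rep.mp hs

lemma n0_eq (hm : 0 < m) (hmul : HasMultiplicity S m) : n ⟨0, hm⟩ = m := by
  obtain ⟨hmS, hm0, hmle⟩ := hmul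
  obtain ⟨c, hc⟩ := rep_exists hmono hgen hmin hmS
  have hc0 : c ≠ 0 := by
    rintro rfl
    rw [show sdeg n 0 = 0 by simp [sdeg]] at hc
    exact hm0 hc
  obtain ⟨i, hi⟩ : ∃ i, 0 < c i := by
    by_contra hcon
    push_neg at hcon
    exact hc0 (funext fun i => Nat.le_zero.mp (hcon i))
  have h1 : n i ≤ m := hc ▸ sdeg_ge' n c hi
  have h2 : n ⟨0, hm⟩ ≤ n i := hmono.monotone (by simp [Fin.le_def])
  have h3 : m ≤ n ⟨0, hm⟩ :=
    hmle _ (n_mem_S hmono hgen hmin _) (n_pos hmono hgen hmin _).ne'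
  omega

lemma not_dvd_gen (hm : 0 < m) (i : Fin m) (hi : i ≠ ⟨0, hm⟩) :
    ¬ (n ⟨0, hm⟩ ∣ n i) := by
  rintro ⟨t, ht⟩
  apply drop_gen hmono hgen hmin i
  have h0 : n ⟨0, hm⟩ ∈ Set.range n \ {n i} :=
    ⟨⟨_, rfl⟩, fun hh => hi (hmono.injective hh).symm⟩
  have := nsmul_mem (AddSubmonoid.subset_closure h0) t
  rw [smul_eq_mul, mul_comm] at this
  exact ht ▸ this

end SGens
end ArfAux4

namespace ArfFwd
open ArfAux ArfAux3 ArfAux4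

variable {k : Type*} [Field k] {m : ℕ}

variable {S : Set ℕ} {n : Fin m → ℕ}
  (hArf : IsArf S)
  (hmono : StrictMono n)
  (hgen : S = (AddSubmonoid.closure (Set.range n) : Set ℕ))
  (hmin : ∀ T : Set ℕ, T ⊆ Set.range n →
      S = (AddSubmonoid.closure T : Set ℕ) → T = Set.range n)

include hArf hmono hgen hmin

theorem forward_direction (hm4 : 4 ≤ m)
    (G : Set (MvPolynomial (Fin m) k)) (hspan : Ideal.span G = definingIdeal k n)
    (hminG : ∀ G' ⊆ G, Ideal.span G' = definingIdeal k n → G' = G)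
    (hbinG : ∀ p ∈ G, ∃ a b : Fin m → ℕ,
      p = mono k a - mono k b ∧ ∀ i, a i ≠ 0 ∨ b i ≠ 0) : False := by
  classical
  set i0 : Fin m := ⟨0, by omega⟩ with hi0
  set i1 : Fin m := ⟨1, by omega⟩ with hi1
  set i2 : Fin m := ⟨2, by omega⟩ with hi2
  set i3 : Fin m := ⟨3, by omega⟩ with hi3
  have hGI : G ⊆ (definingIdeal k n : Set (MvPolynomial (Fin m) k)) := by
    rw [← hspan]; exact Ideal.subset_span
  -- 0 ∉ G
  have h0G : (0 : MvPolynomial (Fin m) k) ∉ G := by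
    intro h0
    have hins : G = insert 0 (G \ {0}) := by
      ext x; simp only [Set.mem_insert_iff, Set.mem_diff, Set.mem_singleton_iff]
      constructor
      · intro hx; by_cases hx0 : x = 0
        · exact Or.inl hx0
        · exact Or.inr ⟨hx, hx0⟩
      · rintro (rfl | ⟨hx, _⟩)
        · exact h0
        · exact hx
    have hsp : Ideal.span (G \ {0}) = definingIdeal k n := by
      rw [← hspan]
      conv_rhs => rw [hins]
      exact (Submodule.span_insert_zero).symm
    have heq := hminG (G \ {0}) Set.diff_subset hsp
    have h02 : (0 : MvPolynomial (Fin m) k) ∈ G \ {0} := by rw [heq]; exact h0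
    exact h02.2 rfl
  -- the Arf element
  have hn01 : n i0 ≤ n i1 := (hmono (by simp [hi0, hi1, Fin.lt_def])).le
  have hw : 2 * n i1 - n i0 ∈ S :=
    hArf (n i0) (n_mem_S hmono hgen hmin i0) (n i1) (n_mem_S hmono hgen hmin i1)
      hn01
  obtain ⟨c', hc'⟩ := rep_exists hmono hgen hmin hw
  set cful : Fin m → ℕ := e i0 + c' with hcful
  have hn0pos := n_pos hmono hgen hmin i0
  have hsdegcful : sdeg n cful = 2 * n i1 := by
    rw [hcful, sdeg_add, sdeg_e, ← hc']
    omega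
  set a1 : Fin m → ℕ := fun j => if j = i1 then 2 else 0 with ha1
  have hsdega1 : sdeg n a1 = 2 * n i1 := by
    rw [ha1, sdeg, Finset.sum_eq_single i1]
    · simp
    · intro j _ hj; simp [hj]
    · simp
  have hfI : mono k a1 - mono k cful ∈ definingIdeal k n :=
    ArfAux2.binom_mem n (by rw [hsdega1, hsdegcful])
  -- key property of elements of G : no coeff on monomials ≤ a1
  have hkey : ∀ g ∈ G, ∀ w : Fin m →₀ ℕ, (∀ j, w j ≤ a1 j) →
      coeff w g = 0 := by
    intro g hg w hwle
    obtain ⟨a, b, hab, hfull⟩ := hbinG g hg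
    by_contra hco
    rw [hab, coeff_sub, coeff_mono, coeff_mono] at hco
    -- one of a, b equals ⇑w
    have habw : a = ⇑w ∨ b = ⇑w := by
      by_contra hcon
      push_neg at hcon
      rw [if_neg, if_neg] at hco
      · exact hco (sub_self _)
      · intro hh; exact hcon.2 (by rw [← hh]; rfl)
      · intro hh; exact hcon.1 (by rw [← hh]; rfl)
    have hgI : mono k a - mono k b ∈ definingIdeal k n := hab ▸ hGI hg
    have hgne : mono k a - mono k b ≠ 0 := by
      rw [← hab]; intro hh; exact h0G (hh ▸ hg)
    have hane : a ≠ b := by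
      rintro rfl; exact hgne (sub_self _)
    -- symmetric core argument
    have core : ∀ x y : Fin m → ℕ, x ≠ y → sdeg n x = sdeg n y →
        (∀ i, x i ≠ 0 ∨ y i ≠ 0) → (∀ j, x j ≤ a1 j) → False := by
      intro x y hxy hdeg hfs hxle
      have hx1 : x i1 ≤ 2 := by have := hxle i1; simpa [ha1] using this
      have hxj : ∀ j, j ≠ i1 → x j = 0 := by
        intro j hj; have := hxle j; simpa [ha1, hj] using this
      interval_cases hx1' : x i1
      · -- x = 0
        have hx0 : x = 0 := by
          funext j
          by_cases hj : j = i1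
          · rw [hj]; exact hx1'
          · exact hxj j hj
        rw [hx0] at hdeg
        rw [show sdeg n (0 : Fin m → ℕ) = 0 by simp [sdeg]] at hdeg
        exact hxy (hx0.trans ((sdeg_zero_iff hmono hgen hmin y).mp hdeg.symm).symm)
      · -- x = e i1
        have hx0 : x = e i1 := by
          funext j
          by_cases hj : j = i1
          · rw [hj, hx1']; simp [e]
          · rw [hxj j hj]; simp [e, hj]
        rw [hx0, sdeg_e] at hdeg
        have := rep_of_gen hmono hgen hmin i1 hdeg.symm
        exact hxy (hx0.trans this.symm)
      · -- x i1 = 2 : full support forces y large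
        have hyge : ∀ j, j ≠ i1 → 1 ≤ y j := by
          intro j hj
          rcases hfs j with h | h
          · exact absurd (hxj j hj) h
          · omega
        have hdist01 : i0 ≠ i2 := by simp [hi0, hi2, Fin.ext_iff]
        have hdist02 : i0 ≠ i3 := by simp [hi0, hi3, Fin.ext_iff]
        have hdist12 : i2 ≠ i3 := by simp [hi2, hi3, Fin.ext_iff]
        have h3sum : n i0 + n i2 + n i3 ≤ sdeg n y := by
          have hsub : ({i0, i2, i3} : Finset (Fin m)) ⊆ Finset.univ :=
            Finset.subset_univ _
          have hsum : ∑ j ∈ ({i0, i2, i3} : Finset (Fin m)), y j * n j ≤ sdeg n y := by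
            rw [sdeg]
            exact Finset.sum_le_sum_of_subset hsub
          have hexp : ∑ j ∈ ({i0, i2, i3} : Finset (Fin m)), y j * n j
              = y i0 * n i0 + y i2 * n i2 + y i3 * n i3 := by
            rw [Finset.sum_insert (by simp [hdist01, hdist02]),
              Finset.sum_insert (by simp [hdist12]), Finset.sum_singleton]
            ring
          have hy0 := hyge i0 (by simp [hi0, hi1, Fin.ext_iff])
          have hy2 := hyge i2 (by simp [hi2, hi1, Fin.ext_iff])
          have hy3 := hyge i3 (by simp [hi3, hi1, Fin.ext_iff])
          have e0 : n i0 ≤ y i0 * n i0 := Nat.le_mul_of_pos_left _ hy0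
          have e2 : n i2 ≤ y i2 * n i2 := Nat.le_mul_of_pos_left _ hy2
          have e3 : n i3 ≤ y i3 * n i3 := Nat.le_mul_of_pos_left _ hy3
          omega
        -- sdeg x = 2 * n i1
        have hsx : sdeg n x = 2 * n i1 := by
          rw [sdeg, Finset.sum_eq_single i1]
          · rw [hx1']
          · intro j _ hj; rw [hxj j hj]; ring
          · intro hh; exact absurd (Finset.mem_univ i1) hh
        have hlt12 : n i1 < n i2 := hmono (by simp [hi1, hi2, Fin.lt_def])
        have hlt23 : n i2 < n i3 := hmono (by simp [hi2, hi3, Fin.lt_def])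
        rw [hsx] at hdeg
        rw [← hdeg] at h3sum
        omega
    rcases habw with ha | hb
    · have hdeg := ArfAux2.sdeg_eq_of_binom_mem n hgI
      exact core a b hane hdeg hfull (ha ▸ fun j => hwle j)
    · have hdeg := (ArfAux2.sdeg_eq_of_binom_mem n hgI).symm
      exact core b a (Ne.symm hane) hdeg (fun i => (hfull i).symm) (hb ▸ fun j => hwle j)
  -- span induction
  have hC : ∀ p ∈ definingIdeal k n, ∀ w : Fin m →₀ ℕ, (∀ j, w j ≤ a1 j) →
      coeff w p = 0 := by
    intro p hp
    rw [← hspan] at hp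
    induction hp using Submodule.span_induction with
    | mem x hx => exact hkey x hx
    | zero => intro w _; simp
    | add x y hx hy ihx ihy =>
      intro w hw
      rw [coeff_add, ihx w hw, ihy w hw, add_zero]
    | smul r x hx ih =>
      intro w hw
      rw [smul_eq_mul, coeff_mul]
      apply Finset.sum_eq_zero
      intro z hz
      rw [Finset.HasAntidiagonal.mem_antidiagonal] at hz
      have hzle : ∀ j, z.2 j ≤ a1 j := by
        intro j
        have : z.1 j + z.2 j = w j := by
          rw [← hz]; rfl
        have := hw j
        omega
      rw [ih z.2 hzle, mul_zero]
  -- contradiction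
  have hcf := hC _ hfI (Finsupp.equivFunOnFinite.symm a1) (by
    intro j
    rw [show ((Finsupp.equivFunOnFinite.symm a1) : Fin m →₀ ℕ) j = a1 j from rfl])
  rw [coeff_sub, coeff_mono, coeff_mono, if_pos rfl, if_neg] at hcf
  · norm_num at hcf
  · intro hh
    have : cful = a1 := by
      have := congrArg (Finsupp.equivFunOnFinite) hh
      simpa using this
    have h1 : cful i0 = a1 i0 := by rw [this]
    have hi01 : i0 ≠ i1 := by simp [hi0, hi1, Fin.ext_iff]
    rw [hcful, ha1] at h1
    simp [e, hi01] at h1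

end ArfFwd

namespace ArfBwd3
open ArfAux ArfAux3 ArfAux4

variable {k : Type*} [Field k]

/-- full-support binomials of the kernel -/
def FS (k : Type*) [Field k] {m : ℕ} (n : Fin m → ℕ) : Set (MvPolynomial (Fin m) k) :=
  {p | ∃ a b : Fin m → ℕ, p = mono k a - mono k b ∧ (∀ i, a i ≠ 0 ∨ b i ≠ 0) ∧
    sdeg n a = sdeg n b}

lemma FS_subset_ideal {m : ℕ} (n : Fin m → ℕ) :
    FS k n ⊆ (definingIdeal k n : Set (MvPolynomial (Fin m) k)) := by
  rintro p ⟨a, b, rfl, _, hdeg⟩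
  exact ArfAux2.binom_mem n hdeg

section Three

variable {S : Set ℕ} {n : Fin 3 → ℕ}
  (hArf : IsArf S)
  (hmono : StrictMono n)
  (hgen : S = (AddSubmonoid.closure (Set.range n) : Set ℕ))
  (hmin : ∀ T : Set ℕ, T ⊆ Set.range n →
      S = (AddSubmonoid.closure T : Set ℕ) → T = Set.range n)
  (hmul : HasMultiplicity S 3)

include hArf hmono hgen hmin hmul

lemma n0_three : n 0 = 3 :=
  n0_eq hmono hgen hmin (by norm_num) hmul

lemma not_three_dvd (i : Fin 3) (hi : i ≠ 0) : ¬ (3 ∣ n i) := by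
  have h := not_dvd_gen hmono hgen hmin (by norm_num : (0:ℕ) < 3) i
    (by simpa using hi)
  rwa [show n ⟨0, by norm_num⟩ = 3 from n0_three hArf hmono hgen hmin hmul] at h

lemma F1_data : ∃ p q : ℕ, 1 ≤ p ∧ 1 ≤ q ∧ 2 * n 1 = p * n 0 + q * n 2 := by
  have h01 : n 0 ≤ n 1 := (hmono (by norm_num : (0 : Fin 3) < 1)).le
  have hw : 2 * n 1 - n 0 ∈ S :=
    hArf (n 0) (n_mem_S hmono hgen hmin 0) (n 1) (n_mem_S hmono hgen hmin 1) h01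
  obtain ⟨c, hc⟩ := rep_exists hmono hgen hmin hw
  have hpos : ∀ i, 0 < n i := n_pos hmono hgen hmin
  have hexp : sdeg n c = c 0 * n 0 + c 1 * n 1 + c 2 * n 2 := by
    rw [sdeg, Fin.sum_univ_three]
  have harith : 2 * n 1 = n 0 + sdeg n c := by
    have := hpos 0
    omega
  have hc1 : c 1 ≤ 1 := by
    by_contra hcon
    have h2 : 2 * n 1 ≤ c 1 * n 1 := Nat.mul_le_mul_right _ (by omega)
    have h3 := sdeg_ge n c 1
    have := hpos 0
    omega
  have hr : (1 + c 0) * n 0 = n 0 + c 0 * n 0 := by ring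
  rcases Nat.lt_or_ge (c 1) 1 with hc1' | hc1'
  · -- c 1 = 0
    have hz : c 1 * n 1 = 0 := by
      have : c 1 = 0 := by omega
      rw [this]; ring
    refine ⟨1 + c 0, c 2, by omega, ?_, by omega⟩
    by_contra hq
    have hq0 : c 2 * n 2 = 0 := by
      have : c 2 = 0 := by omega
      rw [this]; ring
    have h3 : (3:ℕ) ∣ 2 * n 1 := by
      rw [show 2 * n 1 = (1 + c 0) * n 0 by omega,
        n0_three hArf hmono hgen hmin hmul]
      exact ⟨1 + c 0, by ring⟩
    have := (Nat.Prime.dvd_mul (by norm_num)).mp h3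
    rcases this with h | h
    · omega
    · exact not_three_dvd hArf hmono hgen hmin hmul 1 (by norm_num) h
  · -- c 1 = 1 : impossible
    exfalso
    have hc11 : c 1 = 1 := by omega
    have hz1 : c 1 * n 1 = n 1 := by rw [hc11]; ring
    have hn1 : sdeg n ![1 + c 0, 0, c 2] = n 1 := by
      rw [sdeg, Fin.sum_univ_three]
      simp only [Matrix.cons_val_zero, Matrix.cons_val_one, Matrix.head_cons,
        Matrix.cons_val_two, Matrix.tail_cons]
      omega
    have := rep_of_gen hmono hgen hmin 1 hn1
    have h1 := congrFun this 1
    simp [e] at h1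

lemma F2_data : ∃ p q : ℕ, 1 ≤ p ∧ 1 ≤ q ∧ 2 * n 2 = p * n 0 + q * n 1 := by
  have h02 : n 0 ≤ n 2 := (hmono (by decide : (0 : Fin 3) < 2)).le
  have hw : 2 * n 2 - n 0 ∈ S :=
    hArf (n 0) (n_mem_S hmono hgen hmin 0) (n 2) (n_mem_S hmono hgen hmin 2) h02
  obtain ⟨c, hc⟩ := rep_exists hmono hgen hmin hw
  have hpos : ∀ i, 0 < n i := n_pos hmono hgen hmin
  have hexp : sdeg n c = c 0 * n 0 + c 1 * n 1 + c 2 * n 2 := by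
    rw [sdeg, Fin.sum_univ_three]
  have harith : 2 * n 2 = n 0 + sdeg n c := by
    have := hpos 0
    omega
  have hc2 : c 2 ≤ 1 := by
    by_contra hcon
    have h2 : 2 * n 2 ≤ c 2 * n 2 := Nat.mul_le_mul_right _ (by omega)
    have h3 := sdeg_ge n c 2
    have := hpos 0
    omega
  have hr : (1 + c 0) * n 0 = n 0 + c 0 * n 0 := by ring
  rcases Nat.lt_or_ge (c 2) 1 with hc2' | hc2'
  · -- c 2 = 0
    have hz : c 2 * n 2 = 0 := by
      have : c 2 = 0 := by omega
      rw [this]; ring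
    refine ⟨1 + c 0, c 1, by omega, ?_, by omega⟩
    by_contra hq
    have hq0 : c 1 * n 1 = 0 := by
      have : c 1 = 0 := by omega
      rw [this]; ring
    have h3 : (3:ℕ) ∣ 2 * n 2 := by
      rw [show 2 * n 2 = (1 + c 0) * n 0 by omega,
        n0_three hArf hmono hgen hmin hmul]
      exact ⟨1 + c 0, by ring⟩
    have := (Nat.Prime.dvd_mul (by norm_num)).mp h3
    rcases this with h | h
    · omega
    · exact not_three_dvd hArf hmono hgen hmin hmul 2 (by decide) h
  · -- c 2 = 1 : impossible
    exfalso
    have hc21 : c 2 = 1 := by omega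
    have hz1 : c 2 * n 2 = n 2 := by rw [hc21]; ring
    have hn2 : sdeg n ![1 + c 0, c 1, 0] = n 2 := by
      rw [sdeg, Fin.sum_univ_three]
      simp only [Matrix.cons_val_zero, Matrix.cons_val_one, Matrix.head_cons,
        Matrix.cons_val_two, Matrix.tail_cons]
      omega
    have := rep_of_gen hmono hgen hmin 2 hn2
    have h1 := congrFun this 2
    simp [e] at h1

end Three
lemma pred_mul {x : ℕ} (y : ℕ) (h : 1 ≤ x) : (x - 1) * y + y = x * y := by
  have hx : x - 1 + 1 = x := by omega
  calc (x-1)*y + y = ((x-1)+1) * y := by ring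
  _ = x * y := by rw [hx]

lemma pred2_mul {x : ℕ} (y : ℕ) (h : 2 ≤ x) : (x - 2) * y + 2 * y = x * y := by
  have hx : x - 2 + 2 = x := by omega
  calc (x-2)*y + 2*y = ((x-2)+2) * y := by ring
  _ = x * y := by rw [hx]

lemma sdeg_vec (n : Fin 3 → ℕ) (a b c : ℕ) :
    sdeg n ![a,b,c] = a * n 0 + b * n 1 + c * n 2 := by
  rw [sdeg, Fin.sum_univ_three]
  simp only [Matrix.cons_val_zero, Matrix.cons_val_one, Matrix.head_cons,
    Matrix.cons_val_two, Matrix.tail_cons]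

section Cores

variable {n : Fin 3 → ℕ} {J : Ideal (MvPolynomial (Fin 3) k)}

lemma core12 (hpos : ∀ i, 0 < n i) (hn12 : n 1 < n 2)
    (p₁ q₁ : ℕ) (hp₁ : 1 ≤ p₁) (hq₁ : 1 ≤ q₁)
    (hF1 : 2 * n 1 = p₁ * n 0 + q₁ * n 2)
    (hF1mem : mono k ![0,2,0] - mono k ![p₁,0,q₁] ∈ J)
    (d : ℕ)
    (IH : ∀ d' < d, ∀ A B : Fin 3 → ℕ, sdeg n A = d' → sdeg n B = d' →
      mono k A - mono k B ∈ J)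
    (α β : ℕ) (hα : 0 < α) (hβ : 0 < β)
    (hA : α * n 1 = d) (hB : β * n 2 = d) :
    mono k ![0,α,0] - mono k ![0,0,β] ∈ J := by
  have hβn : n 2 ≤ β * n 2 := Nat.le_mul_of_pos_left _ hβ
  have hα2 : 2 ≤ α := by
    rcases Nat.lt_or_ge α 2 with h | h
    · have hα1 : α = 1 := by omega
      rw [hα1, one_mul] at hA
      omega
    · exact h
  have hid : mono k ![0,α,0] - mono k ![0,0,β]
      = mono k ![0,α-2,0] * (mono k ![0,2,0] - mono k ![p₁,0,q₁])
        + (mono k ![p₁,α-2,q₁] - mono k ![0,0,β]) := by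
    have e1 : (![0,α,0] : Fin 3 → ℕ) = ![0,α-2,0] + ![0,2,0] := by
      funext j; fin_cases j <;> simp <;> omega
    have e2 : (![p₁,α-2,q₁] : Fin 3 → ℕ) = ![0,α-2,0] + ![p₁,0,q₁] := by
      funext j; fin_cases j <;> simp
    rw [e1, mono_add, e2, mono_add]; ring
  rw [hid]
  apply Submodule.add_mem
  · exact Ideal.mul_mem_left _ _ hF1mem
  · have e3 : (![p₁,α-2,q₁] : Fin 3 → ℕ) = ![0,0,1] + ![p₁,α-2,q₁-1] := by
      funext j; fin_cases j <;> simp <;> omega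
    have e4 : (![0,0,β] : Fin 3 → ℕ) = ![0,0,1] + ![0,0,β-1] := by
      funext j; fin_cases j <;> simp <;> omega
    rw [e3, mono_add, e4, mono_add, ← mul_sub]
    apply Ideal.mul_mem_left
    have h1 := pred2_mul (n 1) hα2
    have h2 := pred_mul (n 2) hq₁
    have h3 := pred_mul (n 2) hβ
    apply IH (d - n 2) (by omega) _ _ ?_ ?_
    · rw [sdeg_vec]; omega
    · rw [sdeg_vec]; omega

lemma core01 (hpos : ∀ i, 0 < n i) (h3 : n 0 = 3) (hndvd : ¬ (3 ∣ n 1))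
    (p₁ q₁ : ℕ) (hp₁ : 1 ≤ p₁) (hq₁ : 1 ≤ q₁)
    (hF1 : 2 * n 1 = p₁ * n 0 + q₁ * n 2)
    (hF1mem : mono k ![0,2,0] - mono k ![p₁,0,q₁] ∈ J)
    (d : ℕ)
    (IH : ∀ d' < d, ∀ A B : Fin 3 → ℕ, sdeg n A = d' → sdeg n B = d' →
      mono k A - mono k B ∈ J)
    (α β : ℕ) (hα : 0 < α) (hβ : 0 < β)
    (hA : α * n 0 = d) (hB : β * n 1 = d) :
    mono k ![α,0,0] - mono k ![0,β,0] ∈ J := by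
  have hβ2 : 2 ≤ β := by
    have hdv : (3:ℕ) ∣ β * n 1 := by
      rw [hB, ← hA, h3]
      exact ⟨α, by ring⟩
    rcases (Nat.Prime.dvd_mul (by norm_num)).mp hdv with h | h
    · omega
    · exact absurd h hndvd
  have hid : mono k ![α,0,0] - mono k ![0,β,0]
      = (mono k ![α,0,0] - mono k ![p₁,β-2,q₁])
        - mono k ![0,β-2,0] * (mono k ![0,2,0] - mono k ![p₁,0,q₁]) := by
    have e1 : (![0,β,0] : Fin 3 → ℕ) = ![0,β-2,0] + ![0,2,0] := by
      funext j; fin_cases j <;> simp <;> omega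
    have e2 : (![p₁,β-2,q₁] : Fin 3 → ℕ) = ![0,β-2,0] + ![p₁,0,q₁] := by
      funext j; fin_cases j <;> simp
    rw [e1, mono_add, e2, mono_add]; ring
  rw [hid]
  apply Submodule.sub_mem
  · have e3 : (![α,0,0] : Fin 3 → ℕ) = ![1,0,0] + ![α-1,0,0] := by
      funext j; fin_cases j <;> simp <;> omega
    have e4 : (![p₁,β-2,q₁] : Fin 3 → ℕ) = ![1,0,0] + ![p₁-1,β-2,q₁] := by
      funext j; fin_cases j <;> simp <;> omega
    rw [e3, mono_add, e4, mono_add, ← mul_sub]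
    apply Ideal.mul_mem_left
    have h1 := pred_mul (n 0) hα
    have h2 := pred_mul (n 0) hp₁
    have h4 := pred2_mul (n 1) hβ2
    have h5 : n 0 ≤ α * n 0 := Nat.le_mul_of_pos_left _ hα
    have h6 := hpos 0
    apply IH (d - n 0) (by omega) _ _ ?_ ?_
    · rw [sdeg_vec]; omega
    · rw [sdeg_vec]; omega
  · exact Ideal.mul_mem_left _ _ hF1mem

lemma core02 (hpos : ∀ i, 0 < n i) (h3 : n 0 = 3) (hndvd : ¬ (3 ∣ n 2))
    (p₂ q₂ : ℕ) (hp₂ : 1 ≤ p₂) (hq₂ : 1 ≤ q₂)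
    (hF2 : 2 * n 2 = p₂ * n 0 + q₂ * n 1)
    (hF2mem : mono k ![0,0,2] - mono k ![p₂,q₂,0] ∈ J)
    (d : ℕ)
    (IH : ∀ d' < d, ∀ A B : Fin 3 → ℕ, sdeg n A = d' → sdeg n B = d' →
      mono k A - mono k B ∈ J)
    (α β : ℕ) (hα : 0 < α) (hβ : 0 < β)
    (hA : α * n 0 = d) (hB : β * n 2 = d) :
    mono k ![α,0,0] - mono k ![0,0,β] ∈ J := by
  have hβ2 : 2 ≤ β := by
    have hdv : (3:ℕ) ∣ β * n 2 := by
      rw [hB, ← hA, h3]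
      exact ⟨α, by ring⟩
    rcases (Nat.Prime.dvd_mul (by norm_num)).mp hdv with h | h
    · omega
    · exact absurd h hndvd
  have hid : mono k ![α,0,0] - mono k ![0,0,β]
      = (mono k ![α,0,0] - mono k ![p₂,q₂,β-2])
        - mono k ![0,0,β-2] * (mono k ![0,0,2] - mono k ![p₂,q₂,0]) := by
    have e1 : (![0,0,β] : Fin 3 → ℕ) = ![0,0,β-2] + ![0,0,2] := by
      funext j; fin_cases j <;> simp <;> omega
    have e2 : (![p₂,q₂,β-2] : Fin 3 → ℕ) = ![0,0,β-2] + ![p₂,q₂,0] := by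
      funext j; fin_cases j <;> simp
    rw [e1, mono_add, e2, mono_add]; ring
  rw [hid]
  apply Submodule.sub_mem
  · have e3 : (![α,0,0] : Fin 3 → ℕ) = ![1,0,0] + ![α-1,0,0] := by
      funext j; fin_cases j <;> simp <;> omega
    have e4 : (![p₂,q₂,β-2] : Fin 3 → ℕ) = ![1,0,0] + ![p₂-1,q₂,β-2] := by
      funext j; fin_cases j <;> simp <;> omega
    rw [e3, mono_add, e4, mono_add, ← mul_sub]
    apply Ideal.mul_mem_left
    have h1 := pred_mul (n 0) hα
    have h2 := pred_mul (n 0) hp₂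
    have h4 := pred2_mul (n 2) hβ2
    have h5 : n 0 ≤ α * n 0 := Nat.le_mul_of_pos_left _ hα
    have h6 := hpos 0
    apply IH (d - n 0) (by omega) _ _ ?_ ?_
    · rw [sdeg_vec]; omega
    · rw [sdeg_vec]; omega
  · exact Ideal.mul_mem_left _ _ hF2mem

end Cores

section Main3

variable {S : Set ℕ} {n : Fin 3 → ℕ}
  (hArf : IsArf S)
  (hmono : StrictMono n)
  (hgen : S = (AddSubmonoid.closure (Set.range n) : Set ℕ))
  (hmin : ∀ T : Set ℕ, T ⊆ Set.range n →
      S = (AddSubmonoid.closure T : Set ℕ) → T = Set.range n)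
  (hmul : HasMultiplicity S 3)

include hArf hmono hgen hmin hmul

theorem binom_span3 :
    ∀ d : ℕ, ∀ A B : Fin 3 → ℕ, sdeg n A = d → sdeg n B = d →
      mono (m := 3) k A - mono k B ∈ Ideal.span (FS k n) := by
  classical
  obtain ⟨p₁, q₁, hp₁, hq₁, hF1⟩ := F1_data hArf hmono hgen hmin hmul
  obtain ⟨p₂, q₂, hp₂, hq₂, hF2⟩ := F2_data hArf hmono hgen hmin hmul
  have hpos : ∀ i, 0 < n i := n_pos hmono hgen hmin
  have h3 : n 0 = 3 := n0_three hArf hmono hgen hmin hmul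
  have hnd1 : ¬ (3 ∣ n 1) := not_three_dvd hArf hmono hgen hmin hmul 1 (by decide)
  have hnd2 : ¬ (3 ∣ n 2) := not_three_dvd hArf hmono hgen hmin hmul 2 (by decide)
  have hn12 : n 1 < n 2 := hmono (by decide : (1 : Fin 3) < 2)
  have hF1mem : mono k ![0,2,0] - mono k ![p₁,0,q₁] ∈ Ideal.span (FS k n) := by
    apply Ideal.subset_span
    refine ⟨![0,2,0], ![p₁,0,q₁], rfl, ?_, ?_⟩
    · intro i; fin_cases i <;> simp <;> omega
    · rw [sdeg_vec, sdeg_vec]; omega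
  have hF2mem : mono k ![0,0,2] - mono k ![p₂,q₂,0] ∈ Ideal.span (FS k n) := by
    apply Ideal.subset_span
    refine ⟨![0,0,2], ![p₂,q₂,0], rfl, ?_, ?_⟩
    · intro i; fin_cases i <;> simp <;> omega
    · rw [sdeg_vec, sdeg_vec]; omega
  intro d
  induction d using Nat.strong_induction_on with
  | _ d IH =>
  intro A B hA hB
  by_cases hAB : A = B
  · rw [hAB, sub_self]; exact zero_mem _
  by_cases hcomm : ∃ i, 0 < A i ∧ 0 < B i
  · -- cancel a common variable
    obtain ⟨i, hAi, hBi⟩ := hcomm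
    have eA : A = e i + (A - e i) := by
      funext j
      by_cases hj : j = i <;> simp [e, hj, Pi.add_apply, Pi.sub_apply] <;> omega
    have eB : B = e i + (B - e i) := by
      funext j
      by_cases hj : j = i <;> simp [e, hj, Pi.add_apply, Pi.sub_apply] <;> omega
    have hsdA : sdeg n A = n i + sdeg n (A - e i) := by
      conv_lhs => rw [eA]
      rw [sdeg_add, sdeg_e]
    have hsdB : sdeg n B = n i + sdeg n (B - e i) := by
      conv_lhs => rw [eB]
      rw [sdeg_add, sdeg_e]
    have hlt : sdeg n (A - e i) < d := by
      have := hpos i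
      omega
    have hmem := IH _ hlt (A - e i) (B - e i) rfl (by omega)
    have hfac : mono (m := 3) k A - mono k B
        = mono k (e i) * (mono k (A - e i) - mono k (B - e i)) := by
      conv_lhs => rw [eA, eB]
      rw [mono_add, mono_add]; ring
    rw [hfac]
    exact Ideal.mul_mem_left _ _ hmem
  · push_neg at hcomm
    by_cases hfull : ∀ i, A i ≠ 0 ∨ B i ≠ 0
    · exact Ideal.subset_span ⟨A, B, rfl, hfull, by omega⟩
    push_neg at hfull
    obtain ⟨i₀, hAi₀, hBi₀⟩ := hfull
    have hAne : A ≠ 0 := by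
      rintro rfl
      rw [show sdeg n (0 : Fin 3 → ℕ) = 0 by simp [sdeg]] at hA
      exact hAB ((sdeg_zero_iff hmono hgen hmin B).mp (by omega)).symm
    have hBne : B ≠ 0 := by
      rintro rfl
      rw [show sdeg n (0 : Fin 3 → ℕ) = 0 by simp [sdeg]] at hB
      exact hAB ((sdeg_zero_iff hmono hgen hmin A).mp (by omega))
    obtain ⟨u, hu⟩ : ∃ u, A u ≠ 0 := by
      by_contra hcon; push_neg at hcon
      exact hAne (funext fun j => hcon j)
    obtain ⟨v, hv⟩ : ∃ v, B v ≠ 0 := by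
      by_contra hcon; push_neg at hcon
      exact hBne (funext fun j => hcon j)
    have huv : u ≠ v := by
      rintro rfl
      exact hv (Nat.eq_zero_of_le_zero (hcomm u (Nat.pos_of_ne_zero hu)))
    have hui₀ : u ≠ i₀ := by rintro rfl; exact hu hAi₀
    have hvi₀ : v ≠ i₀ := by rintro rfl; exact hv hBi₀
    have hAv : A v = 0 := by
      by_contra h
      exact hv (Nat.eq_zero_of_le_zero (hcomm v (Nat.pos_of_ne_zero h)))
    have hBu : B u = 0 := by
      by_contra h
      exact h (Nat.eq_zero_of_le_zero (hcomm u (Nat.pos_of_ne_zero hu)))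
    have htri : ∀ j : Fin 3, j = u ∨ j = v ∨ j = i₀ := by
      intro j
      have h1 := j.isLt; have h2 := u.isLt; have h3 := v.isLt; have h4 := i₀.isLt
      have e1 : u.val ≠ v.val := fun hh => huv (Fin.ext hh)
      have e2 : u.val ≠ i₀.val := fun hh => hui₀ (Fin.ext hh)
      have e3 : v.val ≠ i₀.val := fun hh => hvi₀ (Fin.ext hh)
      have : j.val = u.val ∨ j.val = v.val ∨ j.val = i₀.val := by omega
      rcases this with h | h | h
      · exact Or.inl (Fin.ext h)
      · exact Or.inr (Or.inl (Fin.ext h))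
      · exact Or.inr (Or.inr (Fin.ext h))
    have hAj : ∀ j, j ≠ u → A j = 0 := by
      intro j hj
      rcases htri j with h | h | h
      · exact absurd h hj
      · exact h ▸ hAv
      · exact h ▸ hAi₀
    have hBj : ∀ j, j ≠ v → B j = 0 := by
      intro j hj
      rcases htri j with h | h | h
      · exact h ▸ hBu
      · exact absurd h hj
      · exact h ▸ hBi₀
    have hupos : 0 < A u := Nat.pos_of_ne_zero hu
    have hvpos : 0 < B v := Nat.pos_of_ne_zero hv
    clear hcomm hAi₀ hBi₀ hvi₀ hui₀ htri hAv hBu hAne hBne hAB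
    fin_cases u <;> fin_cases v
    -- (0,0)
    · exact absurd rfl huv
    -- (0,1) : core01
    · have hAeq : A = ![A 0, 0, 0] := by
        funext j; fin_cases j <;>
          simp [hAj ((1:Fin 3)) (by decide), hAj ((2:Fin 3)) (by decide)]
      have hBeq : B = ![0, B 1, 0] := by
        funext j; fin_cases j <;>
          simp [hBj ((0:Fin 3)) (by decide), hBj ((2:Fin 3)) (by decide)]
      rw [hAeq] at hA
      rw [hBeq] at hB
      rw [sdeg_vec] at hA hB
      rw [hAeq, hBeq]
      exact core01 hpos h3 hnd1 p₁ q₁ hp₁ hq₁ hF1 hF1mem d IH (A 0) (B 1)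
        hupos hvpos (by omega) (by omega)
    -- (0,2) : core02
    · have hAeq : A = ![A 0, 0, 0] := by
        funext j; fin_cases j <;>
          simp [hAj ((1:Fin 3)) (by decide), hAj ((2:Fin 3)) (by decide)]
      have hBeq : B = ![0, 0, B 2] := by
        funext j; fin_cases j <;>
          simp [hBj ((0:Fin 3)) (by decide), hBj ((1:Fin 3)) (by decide)]
      rw [hAeq] at hA
      rw [hBeq] at hB
      rw [sdeg_vec] at hA hB
      rw [hAeq, hBeq]
      exact core02 hpos h3 hnd2 p₂ q₂ hp₂ hq₂ hF2 hF2mem d IH (A 0) (B 2)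
        hupos hvpos (by omega) (by omega)
    -- (1,0) : core01 swapped
    · have hAeq : A = ![0, A 1, 0] := by
        funext j; fin_cases j <;>
          simp [hAj ((0:Fin 3)) (by decide), hAj ((2:Fin 3)) (by decide)]
      have hBeq : B = ![B 0, 0, 0] := by
        funext j; fin_cases j <;>
          simp [hBj ((1:Fin 3)) (by decide), hBj ((2:Fin 3)) (by decide)]
      rw [hAeq] at hA
      rw [hBeq] at hB
      rw [sdeg_vec] at hA hB
      rw [hAeq, hBeq, show mono (m := 3) k ![0, A 1, 0] - mono k ![B 0, 0, 0]
        = -(mono k ![B 0, 0, 0] - mono k ![0, A 1, 0]) from (neg_sub _ _).symm]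
      exact Submodule.neg_mem _
        (core01 hpos h3 hnd1 p₁ q₁ hp₁ hq₁ hF1 hF1mem d IH (B 0) (A 1)
          hvpos hupos (by omega) (by omega))
    -- (1,1)
    · exact absurd rfl huv
    -- (1,2) : core12
    · have hAeq : A = ![0, A 1, 0] := by
        funext j; fin_cases j <;>
          simp [hAj ((0:Fin 3)) (by decide), hAj ((2:Fin 3)) (by decide)]
      have hBeq : B = ![0, 0, B 2] := by
        funext j; fin_cases j <;>
          simp [hBj ((0:Fin 3)) (by decide), hBj ((1:Fin 3)) (by decide)]
      rw [hAeq] at hA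
      rw [hBeq] at hB
      rw [sdeg_vec] at hA hB
      rw [hAeq, hBeq]
      exact core12 hpos hn12 p₁ q₁ hp₁ hq₁ hF1 hF1mem d IH (A 1) (B 2)
        hupos hvpos (by omega) (by omega)
    -- (2,0) : core02 swapped
    · have hAeq : A = ![0, 0, A 2] := by
        funext j; fin_cases j <;>
          simp [hAj ((0:Fin 3)) (by decide), hAj ((1:Fin 3)) (by decide)]
      have hBeq : B = ![B 0, 0, 0] := by
        funext j; fin_cases j <;>
          simp [hBj ((1:Fin 3)) (by decide), hBj ((2:Fin 3)) (by decide)]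
      rw [hAeq] at hA
      rw [hBeq] at hB
      rw [sdeg_vec] at hA hB
      rw [hAeq, hBeq, show mono (m := 3) k ![0, 0, A 2] - mono k ![B 0, 0, 0]
        = -(mono k ![B 0, 0, 0] - mono k ![0, 0, A 2]) from (neg_sub _ _).symm]
      exact Submodule.neg_mem _
        (core02 hpos h3 hnd2 p₂ q₂ hp₂ hq₂ hF2 hF2mem d IH (B 0) (A 2)
          hvpos hupos (by omega) (by omega))
    -- (2,1) : core12 swapped
    · have hAeq : A = ![0, 0, A 2] := by
        funext j; fin_cases j <;>
          simp [hAj ((0:Fin 3)) (by decide), hAj ((1:Fin 3)) (by decide)]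
      have hBeq : B = ![0, B 1, 0] := by
        funext j; fin_cases j <;>
          simp [hBj ((0:Fin 3)) (by decide), hBj ((2:Fin 3)) (by decide)]
      rw [hAeq] at hA
      rw [hBeq] at hB
      rw [sdeg_vec] at hA hB
      rw [hAeq, hBeq, show mono (m := 3) k ![0, 0, A 2] - mono k ![0, B 1, 0]
        = -(mono k ![0, B 1, 0] - mono k ![0, 0, A 2]) from (neg_sub _ _).symm]
      exact Submodule.neg_mem _
        (core12 hpos hn12 p₁ q₁ hp₁ hq₁ hF1 hF1mem d IH (B 1) (A 2)
          hvpos hupos (by omega) (by omega))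
    -- (2,2)
    · exact absurd rfl huv

end Main3
end ArfBwd3

namespace ArfAssemble
open ArfAux ArfAux3 ArfAux4 ArfBwd3

variable {k : Type*} [Field k]

section Two

variable {S : Set ℕ} {n : Fin 2 → ℕ}
  (hmono : StrictMono n)
  (hgen : S = (AddSubmonoid.closure (Set.range n) : Set ℕ))
  (hmin : ∀ T : Set ℕ, T ⊆ Set.range n →
      S = (AddSubmonoid.closure T : Set ℕ) → T = Set.range n)

include hmono hgen hmin

theorem binom_span2 :
    ∀ A B : Fin 2 → ℕ, sdeg n A = sdeg n B →
      mono (m := 2) k A - mono k B ∈ Ideal.span (FS k n) := by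
  intro A B hAB
  by_cases hEq : A = B
  · rw [hEq, sub_self]; exact zero_mem _
  have hpos : ∀ i, 0 < n i := n_pos hmono hgen hmin
  have hexp : ∀ C : Fin 2 → ℕ, sdeg n C = C 0 * n 0 + C 1 * n 1 := by
    intro C; rw [sdeg, Fin.sum_univ_two]
  apply Ideal.subset_span
  refine ⟨A, B, rfl, ?_, hAB⟩
  intro i
  by_contra hcon
  push_neg at hcon
  obtain ⟨hA0, hB0⟩ := hcon
  apply hEq
  rw [hexp A, hexp B] at hAB
  fin_cases i
  · -- A 0 = B 0 = 0
    simp only at hA0 hB0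
    have h1 : A 1 * n 1 = B 1 * n 1 := by
      rw [show A 0 = 0 from hA0, show B 0 = 0 from hB0] at hAB
      simpa using hAB
    have h2 : A 1 = B 1 := Nat.eq_of_mul_eq_mul_right (hpos 1) h1
    funext j; fin_cases j
    · exact hA0.trans hB0.symm
    · exact h2
  · simp only at hA0 hB0
    have h1 : A 0 * n 0 = B 0 * n 0 := by
      rw [show A 1 = 0 from hA0, show B 1 = 0 from hB0] at hAB
      simpa using hAB
    have h2 : A 0 = B 0 := Nat.eq_of_mul_eq_mul_right (hpos 0) h1
    funext j; fin_cases j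
    · exact h2
    · exact hA0.trans hB0.symm

end Two

/-- finite subfamily extraction -/
lemma exists_finite_subset_span {R : Type*} [CommRing R] [IsNoetherianRing R]
    (FSet : Set R) (I : Ideal R) (hI : Ideal.span FSet = I) :
    ∃ G₁ : Finset R, ↑G₁ ⊆ FSet ∧ Ideal.span (↑G₁ : Set R) = I := by
  classical
  obtain ⟨F, hF⟩ := (IsNoetherian.noetherian I : I.FG)
  choose t ht1 ht2 using fun (x : R) (hx : x ∈ Ideal.span FSet) =>
    Submodule.mem_span_finite_of_mem_span hx
  have hmem : ∀ x ∈ F, x ∈ Ideal.span FSet := by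
    intro x hx
    rw [hI, ← hF]
    exact Ideal.subset_span hx
  refine ⟨F.attach.biUnion (fun x => t x.1 (hmem x.1 x.2)), ?_, ?_⟩
  · intro y hy
    simp only [Finset.coe_biUnion, Set.mem_iUnion, Finset.mem_coe] at hy
    obtain ⟨x, hx, hyx⟩ := hy
    exact ht1 x.1 (hmem x.1 x.2) hyx
  · apply le_antisymm
    · rw [← hI]
      apply Ideal.span_mono
      intro y hy
      simp only [Finset.coe_biUnion, Set.mem_iUnion, Finset.mem_coe] at hy
      obtain ⟨x, hx, hyx⟩ := hy
      exact ht1 x.1 (hmem x.1 x.2) hyx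
    · rw [← hF]
      apply Ideal.span_le.mpr
      intro x hx
      have hx' : x ∈ Ideal.span ↑(t x (hmem x hx)) := ht2 x (hmem x hx)
      refine Submodule.span_mono ?_ hx'
      intro y hy
      simp only [Finset.coe_biUnion, Set.mem_iUnion, Finset.mem_coe]
      exact ⟨⟨x, hx⟩, Finset.mem_attach _ _, hy⟩

/-- minimal subfamily extraction -/
lemma exists_minimal_subset {R : Type*} [CommRing R] (I : Ideal R) :
    ∀ (N : ℕ) (G₁ : Finset R), G₁.card = N → Ideal.span (↑G₁ : Set R) = I →
    ∃ G : Set R, G ⊆ ↑G₁ ∧ Ideal.span G = I ∧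
      ∀ G' ⊆ G, Ideal.span G' = I → G' = G := by
  classical
  intro N
  induction N using Nat.strong_induction_on with
  | _ N IH =>
  intro G₁ hcard hspan
  by_cases h : ∃ G' ⊆ (↑G₁ : Set R), Ideal.span G' = I ∧ G' ≠ ↑G₁
  · obtain ⟨G', hsub, hsp, hne⟩ := h
    have hfin : G'.Finite := Set.Finite.subset (G₁.finite_toSet) hsub
    have hF'sub : hfin.toFinset ⊆ G₁ := by
      intro x hx
      rw [Set.Finite.mem_toFinset] at hx
      exact hsub hx
    have hF'ne : hfin.toFinset ≠ G₁ := by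
      intro hh
      apply hne
      rw [← Set.Finite.coe_toFinset hfin, hh]
    have hlt : hfin.toFinset.card < N := by
      rw [← hcard]
      exact Finset.card_lt_card (ssubset_of_subset_of_ne hF'sub hF'ne)
    obtain ⟨G, hG1, hG2, hG3⟩ := IH _ hlt hfin.toFinset rfl
      (by rw [Set.Finite.coe_toFinset]; exact hsp)
    refine ⟨G, ?_, hG2, hG3⟩
    intro x hx
    exact hsub ((Set.Finite.coe_toFinset hfin) ▸ hG1 hx)
  · push_neg at h
    exact ⟨↑G₁, subset_rfl, hspan, fun G' hsub hsp => by
      by_contra hne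
      exact hne (h G' hsub hsp)⟩

end ArfAssemble

/-- Let `S` be an Arf numerical semigroup with multiplicity `m ≥ 2`,
minimally generated by `n 0 < … < n (m-1)` (Arf semigroups have maximal embedding
dimension, so there are `m` minimal generators), and let `k` be a field. Then the
defining ideal `I_S` of `k[S]` is generic — i.e. it has a minimal generating set
consisting of binomials `x^a - x^b` with full support — if and only if `m ≤ 3`. -/
theorem arf_generic_iff (k : Type*) [Field k] (S : Set ℕ) (m : ℕ)
    (hNS : IsNumericalSemigroup S) (hArf : IsArf S)
    (hmul : HasMultiplicity S m) (hm : 2 ≤ m)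
    (n : Fin m → ℕ) (hmono : StrictMono n)
    (hgen : S = (AddSubmonoid.closure (Set.range n) : Set ℕ))
    (hmin : ∀ T : Set ℕ, T ⊆ Set.range n →
      S = (AddSubmonoid.closure T : Set ℕ) → T = Set.range n) :
    (∃ G : Set (MvPolynomial (Fin m) k),
        Ideal.span G = definingIdeal k n ∧
        (∀ G' ⊆ G, Ideal.span G' = definingIdeal k n → G' = G) ∧
        ∀ p ∈ G, ∃ a b : Fin m → ℕ,
          p = (∏ i, MvPolynomial.X i ^ a i) - ∏ i, MvPolynomial.X i ^ b i ∧
          ∀ i, a i ≠ 0 ∨ b i ≠ 0) ↔ m ≤ 3 := by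
  
  constructor
  · rintro ⟨G, hspan, hminG, hbin⟩
    by_contra hcon
    push_neg at hcon
    have hm4 : 4 ≤ m := hcon
    exact ArfFwd.forward_direction hArf hmono hgen hmin hm4 G hspan hminG
      (fun p hp => by
        obtain ⟨a, b, hab, hfull⟩ := hbin p hp
        exact ⟨a, b, hab, hfull⟩)
  · intro hm3
    interval_cases m
    · -- m = 2
      have hIeq : Ideal.span (ArfBwd3.FS k n) = definingIdeal k n := by
        apply le_antisymm
        · exact Ideal.span_le.mpr (ArfBwd3.FS_subset_ideal n)
        · intro p hp
          exact ArfAux4.span_of_binomials n (ArfBwd3.FS k n)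
            (fun a b h => ArfAssemble.binom_span2 hmono hgen hmin a b h) p hp
      obtain ⟨G₁, hG₁sub, hG₁span⟩ :=
        ArfAssemble.exists_finite_subset_span (ArfBwd3.FS k n) _ hIeq
      obtain ⟨G, hGsub, hGspan, hGmin⟩ :=
        ArfAssemble.exists_minimal_subset _ G₁.card G₁ rfl hG₁span
      refine ⟨G, hGspan, hGmin, ?_⟩
      intro p hp
      obtain ⟨a, b, hab, hfull, _⟩ := hG₁sub (hGsub hp)
      exact ⟨a, b, hab, hfull⟩
    · -- m = 3
      have hIeq : Ideal.span (ArfBwd3.FS k n) = definingIdeal k n := by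
        apply le_antisymm
        · exact Ideal.span_le.mpr (ArfBwd3.FS_subset_ideal n)
        · intro p hp
          exact ArfAux4.span_of_binomials n (ArfBwd3.FS k n)
            (fun a b h => ArfBwd3.binom_span3 hArf hmono hgen hmin hmul
              (ArfAux.sdeg n a) a b rfl h.symm) p hp
      obtain ⟨G₁, hG₁sub, hG₁span⟩ :=
        ArfAssemble.exists_finite_subset_span (ArfBwd3.FS k n) _ hIeq
      obtain ⟨G, hGsub, hGspan, hGmin⟩ :=
        ArfAssemble.exists_minimal_subset _ G₁.card G₁ rfl hG₁span
      refine ⟨G, hGspan, hGmin, ?_⟩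
      intro p hp
      obtain ⟨a, b, hab, hfull, _⟩ := hG₁sub (hGsub hp)
      exact ⟨a, b, hab, hfull⟩
end
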